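/- arXiv:math/0701374 — 4 statements merged into one kernel-verified Lean document; each statement's English description precedes it below -/
import Mathlib

section
/- A finitely determined power structure over a ring R is uniquely determined by the family of series (1−t)^{−m} for m ∈ R: if two finitely determined power structures agree on the series (1−t)^{−m} for all m ∈ R, then they agree on all pairs (A(t), m). -/
open PowerSeries

/-- A power structure over a commutative ring `R`: a map
`(1 + tR[[t]]) × R → 1 + tR[[t]]`, `(A, m) ↦ A^m`, satisfying the seven axioms
of Gusein-Zade–Luengo–Melle-Hernández.  The substitution axiom
`A(t^k)^m = (A(t)^m)|_{t → t^k}` is stated coefficientwise. -/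
structure PowerStructure (R : Type*) [CommRing R] where
  pow : PowerSeries R → R → PowerSeries R
  constantCoeff_pow : ∀ A : PowerSeries R, constantCoeff A = 1 → ∀ m : R,
    constantCoeff (pow A m) = 1
  pow_zero : ∀ A : PowerSeries R, constantCoeff A = 1 → pow A 0 = 1
  pow_one : ∀ A : PowerSeries R, constantCoeff A = 1 → pow A 1 = A
  mul_pow : ∀ A B : PowerSeries R, constantCoeff A = 1 → constantCoeff B = 1 →
    ∀ m : R, pow (A * B) m = pow A m * pow B m
  pow_add : ∀ A : PowerSeries R, constantCoeff A = 1 → ∀ m n : R,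
    pow A (m + n) = pow A m * pow A n
  pow_mul : ∀ A : PowerSeries R, constantCoeff A = 1 → ∀ m n : R,
    pow A (m * n) = pow (pow A n) m
  coeff_one_pow : ∀ m : R, coeff 1 (pow (1 + X) m) = m
  pow_subst : ∀ (A B : PowerSeries R) (k : ℕ), 1 ≤ k → constantCoeff A = 1 →
    (∀ n : ℕ, coeff (k * n) B = coeff n A) →
    (∀ n : ℕ, ¬ k ∣ n → coeff n B = 0) →
    ∀ m : R, (∀ n : ℕ, coeff (k * n) (pow B m) = coeff n (pow A m)) ∧
      (∀ n : ℕ, ¬ k ∣ n → coeff n (pow B m) = 0)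

/-- A power structure is finitely determined if for every `N` there is `M` such
that the `N`-jet of `A(t)^m` only depends on the `M`-jet of `A(t)`. -/
def PowerStructure.FinitelyDetermined {R : Type*} [CommRing R]
    (P : PowerStructure R) : Prop :=
  ∀ N : ℕ, ∃ M : ℕ, ∀ A B : PowerSeries R, constantCoeff A = 1 →
    constantCoeff B = 1 → (∀ i ≤ M, coeff i A = coeff i B) →
    ∀ m : R, ∀ i ≤ N, coeff i (P.pow A m) = coeff i (P.pow B m)


section Aux

variable {R : Type*} [CommRing R]

lemma coeff_one_mul' (B C : PowerSeries R) :
    coeff 1 (B * C) = coeff 0 B * coeff 1 C + coeff 1 B * coeff 0 C := by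
  rw [coeff_mul]
  rw [show Finset.HasAntidiagonal.antidiagonal 1 = {(0,1),(1,0)} from by decide]
  simp

lemma constCoeff_one_sub_X_pow (k : ℕ) (hk : 1 ≤ k) :
    constantCoeff (1 - X ^ k : PowerSeries R) = 1 := by
  simp [zero_pow (by omega : k ≠ 0)]

/-- Auxiliary: if `C - 1` vanishes up to degree `k`, multiplication by `C`
does not change coefficients up to degree `k`, and changes the `(k+1)`-st
coefficient by `constantCoeff B * coeff (k+1) C`. -/
lemma aux_coeff_mul (B C : PowerSeries R) (k : ℕ)
    (hC : ∀ p ≤ k, coeff p (C - 1) = 0) :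
    (∀ j ≤ k, coeff j (B * C) = coeff j B) ∧
      coeff (k + 1) (B * C) =
        coeff (k + 1) B + constantCoeff B * coeff (k + 1) (C - 1) := by
  have hBC : B * C = B + B * (C - 1) := by ring
  constructor
  · intro j hj
    rw [hBC, map_add]
    have : coeff j (B * (C - 1)) = 0 := by
      rw [coeff_mul]
      apply Finset.sum_eq_zero
      intro p hp
      have hp2 : p.2 ≤ k := by
        have := Finset.HasAntidiagonal.mem_antidiagonal.mp hp
        omega
      rw [hC p.2 hp2, mul_zero]
    rw [this, add_zero]
  · rw [hBC, map_add]
    congr 1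
    rw [coeff_mul]
    rw [Finset.sum_eq_single (0, k + 1)]
    · simp [coeff_zero_eq_constantCoeff]
    · intro p hp hne
      rw [Finset.HasAntidiagonal.mem_antidiagonal] at hp
      have hp2 : p.2 ≤ k := by
        by_contra hgt
        exact hne (Prod.ext (by omega) (by omega))
      rw [hC p.2 hp2, mul_zero]
    · intro hne
      exact absurd (Finset.HasAntidiagonal.mem_antidiagonal.mpr (by simp)) hne

variable (P : PowerStructure R)

lemma PowerStructure.pow_one_series (m : R) : P.pow 1 m = 1 := by
  have h1 : constantCoeff (1 : PowerSeries R) = 1 := by simp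
  have := P.pow_mul 1 h1 m 0
  rw [P.pow_zero 1 h1] at this
  rw [mul_zero] at this
  rw [P.pow_zero 1 h1] at this
  exact this.symm

/-- `1 - X^k` satisfies the hypotheses of `pow_subst` relative to `1 - X`. -/
lemma subst_hyp (k : ℕ) (hk : 1 ≤ k) (m : R) :
    (∀ n : ℕ, coeff (k * n) (P.pow (1 - X ^ k) m) = coeff n (P.pow (1 - X) m)) ∧
      (∀ n : ℕ, ¬ k ∣ n → coeff n (P.pow (1 - X ^ k) m) = 0) := by
  refine P.pow_subst (1 - X) (1 - X ^ k) k hk (by simp) ?_ ?_ m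
  · intro n
    simp only [map_sub, coeff_one, coeff_X_pow, coeff_X]
    have h0 : k * n = 0 ↔ n = 0 := by
      constructor
      · intro hh; rcases Nat.mul_eq_zero.mp hh with h | h <;> omega
      · intro hh; simp [hh]
    have h1 : k * n = k ↔ n = 1 := by
      constructor
      · intro hh
        have : k * n = k * 1 := by omega
        exact Nat.eq_of_mul_eq_mul_left (by omega) this
      · intro hh; simp [hh]
    simp only [h0, h1]
  · intro n hn
    have hn0 : n ≠ 0 := by rintro rfl; exact hn ⟨0, by simp⟩
    have hnk : n ≠ k := by rintro rfl; exact hn ⟨1, by simp⟩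
    simp [coeff_one, coeff_X_pow, hn0, hnk]

lemma coeff_one_pow_one_sub_X (m : R) : coeff 1 (P.pow (1 - X) m) = -m := by
  have hfac : (1 - X) * (1 + X) = (1 - X ^ 2 : PowerSeries R) := by ring
  have hA : constantCoeff (1 - X : PowerSeries R) = 1 := by simp
  have hB : constantCoeff (1 + X : PowerSeries R) = 1 := by simp
  have hmul := P.mul_pow (1 - X) (1 + X) hA hB m
  rw [hfac] at hmul
  have h2 : coeff 1 (P.pow (1 - X ^ 2) m) = 0 :=
    (subst_hyp P 2 (by norm_num) m).2 1 (by omega)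
  rw [hmul] at h2
  rw [coeff_one_mul'] at h2
  simp only [coeff_zero_eq_constantCoeff] at h2
  rw [P.constantCoeff_pow _ hA, P.constantCoeff_pow _ hB, P.coeff_one_pow] at h2
  linear_combination h2

lemma coeff_pow_one_sub_X_pow (k : ℕ) (hk : 1 ≤ k) (m : R) :
    (∀ p, 1 ≤ p → p < k → coeff p (P.pow (1 - X ^ k) m) = 0) ∧
      coeff k (P.pow (1 - X ^ k) m) = -m := by
  obtain ⟨hmult, hoff⟩ := subst_hyp P k hk m
  constructor
  · intro p hp1 hpk
    apply hoff
    rintro ⟨c, rfl⟩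
    have hc : c ≠ 0 := by rintro rfl; omega
    have hkc : k ≤ k * c := Nat.le_mul_of_pos_right k (Nat.pos_of_ne_zero hc)
    omega
  · have := hmult 1
    rw [mul_one] at this
    rw [this, coeff_one_pow_one_sub_X P m]

end Aux

section Approx

variable {R : Type*} [CommRing R]

/-- The greedy approximation of `A` by finite products `∏ (1-t^j)^{a_j}`. -/
noncomputable def PowerStructure.approx (P : PowerStructure R) (A : PowerSeries R) :
    ℕ → PowerSeries R
  | 0 => 1
  | k + 1 => P.approx A k *
      P.pow (1 - X ^ (k + 1)) (coeff (k + 1) (P.approx A k) - coeff (k + 1) A)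

variable (P : PowerStructure R) (A : PowerSeries R)

lemma PowerStructure.constantCoeff_approx (k : ℕ) :
    constantCoeff (P.approx A k) = 1 := by
  induction k with
  | zero => simp [PowerStructure.approx]
  | succ k ih =>
      rw [PowerStructure.approx, map_mul, ih,
        P.constantCoeff_pow _ (constCoeff_one_sub_X_pow (k + 1) (by omega)), one_mul]

lemma aux_vanish (k : ℕ) (m : R) :
    ∀ p ≤ k, coeff p (P.pow (1 - X ^ (k + 1)) m - 1) = 0 := by
  intro p hp
  rcases Nat.eq_zero_or_pos p with rfl | hp1
  · rw [map_sub, coeff_zero_eq_constantCoeff, map_one,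
      P.constantCoeff_pow _ (constCoeff_one_sub_X_pow (k + 1) (by omega)), sub_self]
  · rw [map_sub, coeff_one, if_neg (by omega), sub_zero]
    exact (coeff_pow_one_sub_X_pow P (k + 1) (by omega) m).1 p hp1 (by omega)

lemma PowerStructure.coeff_approx (hA : constantCoeff A = 1) (k : ℕ) :
    ∀ j ≤ k, coeff j (P.approx A k) = coeff j A := by
  induction k with
  | zero =>
      intro j hj
      interval_cases j
      simp [PowerStructure.approx, coeff_zero_eq_constantCoeff, hA]
  | succ k ih =>
      intro j hj
      set m := coeff (k + 1) (P.approx A k) - coeff (k + 1) A with hm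
      obtain ⟨hlow, hhigh⟩ := aux_coeff_mul (P.approx A k)
        (P.pow (1 - X ^ (k + 1)) m) k (aux_vanish P k m)
      rcases Nat.lt_or_ge j (k + 1) with hjk | hjk
      · rw [PowerStructure.approx, hlow j (by omega)]
        exact ih j (by omega)
      · have hjeq : j = k + 1 := by omega
        subst hjeq
        rw [PowerStructure.approx, hhigh, P.constantCoeff_approx A k, one_mul,
          map_sub, coeff_one, if_neg (by omega), sub_zero,
          (coeff_pow_one_sub_X_pow P (k + 1) (by omega) m).2]
        rw [hm]; ring

end Approx

section Bridge

variable {R : Type*} [CommRing R]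

lemma pow_one_sub_X_pow_eq (P₁ P₂ : PowerStructure R)
    (h : ∀ m : R, P₁.pow (1 - X) m = P₂.pow (1 - X) m) (k : ℕ) (hk : 1 ≤ k) (m : R) :
    P₁.pow (1 - X ^ k) m = P₂.pow (1 - X ^ k) m := by
  ext n
  obtain ⟨hm1, ho1⟩ := subst_hyp P₁ k hk m
  obtain ⟨hm2, ho2⟩ := subst_hyp P₂ k hk m
  by_cases hdvd : k ∣ n
  · obtain ⟨c, rfl⟩ := hdvd
    rw [hm1 c, hm2 c, h m]
  · rw [ho1 n hdvd, ho2 n hdvd]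

lemma pow_approx_eq (P₁ P₂ : PowerStructure R)
    (h : ∀ m : R, P₁.pow (1 - X) m = P₂.pow (1 - X) m) (A : PowerSeries R) (k : ℕ) :
    ∀ m : R, P₁.pow (P₁.approx A k) m = P₂.pow (P₁.approx A k) m := by
  induction k with
  | zero =>
      intro m
      rw [show P₁.approx A 0 = 1 from rfl, P₁.pow_one_series, P₂.pow_one_series]
  | succ k ih =>
      intro m
      set a := coeff (k + 1) (P₁.approx A k) - coeff (k + 1) A with ha
      have hBk : constantCoeff (P₁.approx A k) = 1 := P₁.constantCoeff_approx A k
      have hC : constantCoeff (1 - X ^ (k + 1) : PowerSeries R) = 1 :=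
        constCoeff_one_sub_X_pow (k + 1) (by omega)
      have hD1 : constantCoeff (P₁.pow (1 - X ^ (k + 1)) a) = 1 :=
        P₁.constantCoeff_pow _ hC a
      have hD2 : constantCoeff (P₂.pow (1 - X ^ (k + 1)) a) = 1 :=
        P₂.constantCoeff_pow _ hC a
      have hsplit : P₁.approx A (k + 1) =
          P₁.approx A k * P₁.pow (1 - X ^ (k + 1)) a := rfl
      calc P₁.pow (P₁.approx A (k + 1)) m
          = P₁.pow (P₁.approx A k) m * P₁.pow (P₁.pow (1 - X ^ (k + 1)) a) m := by
            rw [hsplit, P₁.mul_pow _ _ hBk hD1 m]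
        _ = P₂.pow (P₁.approx A k) m * P₂.pow (P₂.pow (1 - X ^ (k + 1)) a) m := by
            rw [ih m, ← P₁.pow_mul _ hC m a, ← P₂.pow_mul _ hC m a,
              pow_one_sub_X_pow_eq P₁ P₂ h (k + 1) (by omega) (m * a)]
        _ = P₂.pow (P₁.approx A (k + 1)) m := by
            rw [hsplit, pow_one_sub_X_pow_eq P₁ P₂ h (k + 1) (by omega) a,
              P₂.mul_pow _ _ hBk hD2 m]

end Bridge

/-- A finitely determined power structure over `R` is uniquely
determined by the series `(1 - t)^{-m}`, `m ∈ R`: two finitely determined power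
structures agreeing on `(1-t)^{-m}` for every `m ∈ R` agree everywhere. -/
theorem finitelyDetermined_powerStructure_unique {R : Type*} [CommRing R]
    (P₁ P₂ : PowerStructure R) (h₁ : P₁.FinitelyDetermined)
    (h₂ : P₂.FinitelyDetermined)
    (h : ∀ m : R, P₁.pow (1 - X) (-m) = P₂.pow (1 - X) (-m)) :
    ∀ (A : PowerSeries R) (m : R), constantCoeff A = 1 →
      P₁.pow A m = P₂.pow A m := by

  have h' : ∀ m : R, P₁.pow (1 - X) m = P₂.pow (1 - X) m := by
    intro m
    have := h (-m)
    rwa [neg_neg] at this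
  intro A m hA
  ext N
  obtain ⟨M₁, hM₁⟩ := h₁ N
  obtain ⟨M₂, hM₂⟩ := h₂ N
  set M := max M₁ M₂ with hM
  set B := P₁.approx A M with hB
  have hBc : constantCoeff B = 1 := P₁.constantCoeff_approx A M
  have hAB : ∀ i ≤ M, coeff i A = coeff i B := by
    intro i hi
    exact (P₁.coeff_approx A hA M i hi).symm
  have e1 : coeff N (P₁.pow A m) = coeff N (P₁.pow B m) :=
    hM₁ A B hA hBc (fun i hi => hAB i (le_trans hi (le_max_left _ _))) m N le_rfl
  have e2 : coeff N (P₂.pow B m) = coeff N (P₂.pow A m) :=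
    (hM₂ A B hA hBc (fun i hi => hAB i (le_trans hi (le_max_right _ _))) m N le_rfl).symm
  rw [e1, pow_approx_eq P₁ P₂ h' A M m, e2]
end

section
/- Newton approximation for plane curve germs (Lemma 4): let f, g ∈ ℂ[[x,y]] with g(γ(t)) = 0 for an arc γ(t) = (x(t), y(t)) ∈ (tℂ[[t]])², suppose the n-jets of f and g coincide, let m = ord₀ γ, Q = min(ord₀ f_x(γ(t)), ord₀ f_y(γ(t))), and assume n > 4Q. Then there exists an arc γ′(t) with f(γ′(t)) = 0 whose (mn−Q)-jet coincides with that of γ. -/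
open PowerSeries

/-- Evaluation `f(γ(t))` of a two-variable power series `f ∈ ℂ[[x,y]]` along an
arc `γ(t) = (x(t), y(t))` with `x(0) = y(0) = 0` (the coefficient of `t^n` only
involves monomials of total degree `≤ n`). -/
noncomputable def evalArc (γ : PowerSeries ℂ × PowerSeries ℂ)
    (f : MvPowerSeries (Fin 2) ℂ) : PowerSeries ℂ :=
  PowerSeries.mk fun n => ∑ a ∈ Finset.range (n + 1), ∑ b ∈ Finset.range (n + 1),
    MvPowerSeries.coeff (Finsupp.single 0 a + Finsupp.single 1 b) f *
      PowerSeries.coeff n (γ.1 ^ a * γ.2 ^ b)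

/-- Partial derivative `∂f/∂x_i` of `f ∈ ℂ[[x,y]]`. -/
noncomputable def pd (i : Fin 2) (f : MvPowerSeries (Fin 2) ℂ) :
    MvPowerSeries (Fin 2) ℂ :=
  fun m => ((m i : ℂ) + 1) * MvPowerSeries.coeff (m + Finsupp.single i 1) f

namespace NewtonAux

open Finset

/-- `oge h k` : the order of `h` is at least `k`. -/
def oge (h : PowerSeries ℂ) (k : ℕ) : Prop := ∀ i, i < k → coeff i h = 0

lemma oge_mul {u v : PowerSeries ℂ} {j k : ℕ} (hu : oge u j) (hv : oge v k) :
    oge (u * v) (j + k) := by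
  intro i hi
  rw [PowerSeries.coeff_mul]
  apply Finset.sum_eq_zero
  rintro ⟨p, q⟩ hpq
  rw [Finset.HasAntidiagonal.mem_antidiagonal] at hpq
  rcases lt_or_ge p j with h | h
  · rw [hu p h, zero_mul]
  · rw [hv q (by omega), mul_zero]

lemma oge_zero (h : PowerSeries ℂ) : oge h 0 := fun i hi => by omega

lemma oge_mono {h : PowerSeries ℂ} {j k : ℕ} (hk : k ≤ j) (hh : oge h j) : oge h k :=
  fun i hi => hh i (by omega)

lemma oge_pow {u : PowerSeries ℂ} {j : ℕ} (hu : oge u j) (b : ℕ) :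
    oge (u ^ b) (j * b) := by
  induction b with
  | zero => simpa using oge_zero 1
  | succ b ih =>
      rw [pow_succ]
      have h2 := oge_mul ih hu
      have : j * (b + 1) = j * b + j := by ring
      rw [this]
      exact h2

lemma oge_neg {u : PowerSeries ℂ} {j : ℕ} (hu : oge u j) : oge (-u) j := by
  intro i hi; rw [map_neg, hu i hi, neg_zero]

lemma coeff_evalArc (x y : PowerSeries ℂ) (f : MvPowerSeries (Fin 2) ℂ) (N : ℕ) :
    coeff N (evalArc (x, y) f) = ∑ a ∈ Finset.range (N + 1), ∑ b ∈ Finset.range (N + 1),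
      MvPowerSeries.coeff (Finsupp.single 0 a + Finsupp.single 1 b) f *
        coeff N (x ^ a * y ^ b) := by
  simp [evalArc, coeff_mk]

/-- jets multiply -/
lemma jeq_mul {u v u' v' : PowerSeries ℂ} {N : ℕ}
    (hu : ∀ i ≤ N, coeff i u = coeff i u')
    (hv : ∀ i ≤ N, coeff i v = coeff i v') :
    ∀ i ≤ N, coeff i (u * v) = coeff i (u' * v') := by
  intro i hi
  rw [PowerSeries.coeff_mul, PowerSeries.coeff_mul]
  apply Finset.sum_congr rfl
  rintro ⟨p, q⟩ hpq
  rw [Finset.HasAntidiagonal.mem_antidiagonal] at hpq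
  rw [hu p (by omega), hv q (by omega)]

lemma jeq_pow {u u' : PowerSeries ℂ} {N : ℕ}
    (hu : ∀ i ≤ N, coeff i u = coeff i u') (b : ℕ) :
    ∀ i ≤ N, coeff i (u ^ b) = coeff i (u' ^ b) := by
  induction b with
  | zero => intro i _; rfl
  | succ b ih =>
      intro i hi
      rw [pow_succ, pow_succ]
      exact jeq_mul ih hu i hi

lemma jeq_evalArc {x y x' y' : PowerSeries ℂ} {N : ℕ}
    (hx : ∀ i ≤ N, coeff i x = coeff i x')
    (hy : ∀ i ≤ N, coeff i y = coeff i y')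
    (f : MvPowerSeries (Fin 2) ℂ) :
    ∀ i ≤ N, coeff i (evalArc (x, y) f) = coeff i (evalArc (x', y') f) := by
  intro i hi
  rw [coeff_evalArc, coeff_evalArc]
  apply Finset.sum_congr rfl; intro a _
  apply Finset.sum_congr rfl; intro b _
  rw [jeq_mul (jeq_pow (fun j hj => hx j (le_trans hj hi)) a)
      (jeq_pow (fun j hj => hy j (le_trans hj hi)) b) i le_rfl]


lemma oge_mul_left (v : PowerSeries ℂ) {u : PowerSeries ℂ} {j : ℕ} (hu : oge u j) :
    oge (v * u) j := by
  have := oge_mul (oge_zero v) hu; simpa using this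

lemma oge_mul_right (v : PowerSeries ℂ) {u : PowerSeries ℂ} {j : ℕ} (hu : oge u j) :
    oge (u * v) j := by
  have := oge_mul hu (oge_zero v); simpa using this

lemma oge_monomials {x y : PowerSeries ℂ} (hx : oge x 1) (hy : oge y 1) (a b : ℕ) :
    oge (x ^ a * y ^ b) (a + b) := by
  have := oge_mul (oge_pow hx a) (oge_pow hy b)
  simpa using this

lemma coeff_evalArc_ext {x y : PowerSeries ℂ} (hx : oge x 1) (hy : oge y 1)
    (h : MvPowerSeries (Fin 2) ℂ) {q N : ℕ} (hqN : q ≤ N) :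
    coeff q (evalArc (x, y) h) = ∑ a ∈ Finset.range (N + 1), ∑ b ∈ Finset.range (N + 1),
      MvPowerSeries.coeff (Finsupp.single 0 a + Finsupp.single 1 b) h *
        coeff q (x ^ a * y ^ b) := by
  rw [coeff_evalArc]
  rw [Finset.sum_subset (Finset.range_subset_range.2 (by omega : q + 1 ≤ N + 1))]
  · apply Finset.sum_congr rfl
    intro a _
    rw [Finset.sum_subset (Finset.range_subset_range.2 (by omega : q + 1 ≤ N + 1))]
    intro b _ hb
    rw [Finset.mem_range, not_lt] at hb
    rw [oge_monomials hx hy a b q (by omega), mul_zero]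
  · intro a _ ha
    rw [Finset.mem_range, not_lt] at ha
    apply Finset.sum_eq_zero
    intro b _
    rw [oge_monomials hx hy a b q (by omega), mul_zero]

lemma coeff_mul_evalArc (u : PowerSeries ℂ) {x y : PowerSeries ℂ}
    (hx : oge x 1) (hy : oge y 1)
    (h : MvPowerSeries (Fin 2) ℂ) (N : ℕ) :
    coeff N (u * evalArc (x, y) h) =
      ∑ a ∈ Finset.range (N + 1), ∑ b ∈ Finset.range (N + 1),
        MvPowerSeries.coeff (Finsupp.single 0 a + Finsupp.single 1 b) h *
          coeff N (u * (x ^ a * y ^ b)) := by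
  rw [PowerSeries.coeff_mul]
  have step : ∀ pq ∈ Finset.HasAntidiagonal.antidiagonal N,
      coeff pq.1 u * coeff pq.2 (evalArc (x, y) h) =
      ∑ a ∈ Finset.range (N + 1), ∑ b ∈ Finset.range (N + 1),
        MvPowerSeries.coeff (Finsupp.single 0 a + Finsupp.single 1 b) h *
          (coeff pq.1 u * coeff pq.2 (x ^ a * y ^ b)) := by
    rintro ⟨p, q⟩ hpq
    rw [Finset.HasAntidiagonal.mem_antidiagonal] at hpq
    rw [coeff_evalArc_ext hx hy h (by omega : q ≤ N), Finset.mul_sum]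
    apply Finset.sum_congr rfl; intro a _
    rw [Finset.mul_sum]
    apply Finset.sum_congr rfl; intro b _
    ring
  rw [Finset.sum_congr rfl step, Finset.sum_comm]
  apply Finset.sum_congr rfl; intro a _
  rw [Finset.sum_comm]
  apply Finset.sum_congr rfl; intro b _
  rw [PowerSeries.coeff_mul, Finset.mul_sum]

lemma coeff_pd1 (f : MvPowerSeries (Fin 2) ℂ) (a b : ℕ) :
    MvPowerSeries.coeff (Finsupp.single 0 a + Finsupp.single 1 b) (pd 1 f) =
      ((b : ℂ) + 1) *
        MvPowerSeries.coeff (Finsupp.single 0 a + Finsupp.single 1 (b + 1)) f := by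
  have h0 : MvPowerSeries.coeff (Finsupp.single 0 a + Finsupp.single 1 b) (pd 1 f)
      = ((((Finsupp.single 0 a + Finsupp.single 1 b : Fin 2 →₀ ℕ) 1 : ℕ) : ℂ) + 1) *
        MvPowerSeries.coeff ((Finsupp.single 0 a + Finsupp.single 1 b) + Finsupp.single 1 1) f := rfl
  rw [h0]
  have h1 : (Finsupp.single 0 a + Finsupp.single 1 b : Fin 2 →₀ ℕ) 1 = b := by
    simp [Finsupp.single_apply]
  have h2 : (Finsupp.single (0 : Fin 2) a + Finsupp.single 1 b) + Finsupp.single 1 1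
      = Finsupp.single 0 a + Finsupp.single 1 (b + 1) := by
    rw [add_assoc, ← Finsupp.single_add]
  rw [h1, h2]

lemma coeff_pow_add {x y ε : PowerSeries ℂ} (hx : oge x 1) (hy : oge y 1)
    {e : ℕ} (he : 1 ≤ e) (hε : oge ε e) {N : ℕ} (hN : N < 2 * e) (a b : ℕ) :
    coeff N (x ^ a * (y + ε) ^ b) =
      coeff N (x ^ a * y ^ b) + (b : ℂ) * coeff N (ε * (x ^ a * y ^ (b - 1))) := by
  cases b with
  | zero => simp
  | succ b' =>
      rw [add_pow, Finset.mul_sum, map_sum, Finset.sum_range_succ, Finset.sum_range_succ]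
      have hz : ∀ k ∈ Finset.range b',
          coeff N (x ^ a * (y ^ k * ε ^ (b' + 1 - k) * (((b' + 1).choose k : ℕ) : ℂ⟦X⟧))) = 0 := by
        intro k hk
        rw [Finset.mem_range] at hk
        have hε2 : oge (ε ^ (b' + 1 - k)) (e * (b' + 1 - k)) := oge_pow hε _
        have : oge (x ^ a * (y ^ k * ε ^ (b' + 1 - k) * ↑((b' + 1).choose k)))
            (e * (b' + 1 - k)) :=
          oge_mul_left _ (oge_mul_right _ (oge_mul_left _ hε2))
        apply this
        have : 2 ≤ b' + 1 - k := by omega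
        calc N < 2 * e := hN
          _ ≤ e * (b' + 1 - k) := by nlinarith
      rw [Finset.sum_eq_zero hz, zero_add]
      have t1 : coeff N (x ^ a * (y ^ (b' + 1) * ε ^ (b' + 1 - (b' + 1)) *
          (((b' + 1).choose (b' + 1) : ℕ) : ℂ⟦X⟧))) = coeff N (x ^ a * y ^ (b' + 1)) := by
        simp
      have t2 : coeff N (x ^ a * (y ^ b' * ε ^ (b' + 1 - b') * (((b' + 1).choose b' : ℕ) : ℂ⟦X⟧)))
          = ((b' + 1 : ℕ) : ℂ) * coeff N (ε * (x ^ a * y ^ b')) := by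
        have harr : x ^ a * (y ^ b' * ε ^ (b' + 1 - b') * (((b' + 1).choose b' : ℕ) : ℂ⟦X⟧))
            = (ε * (x ^ a * y ^ b')) * (C ((((b' + 1).choose b' : ℕ)) : ℂ)) := by
          rw [← map_natCast C ((b' + 1).choose b')]
          have : b' + 1 - b' = 1 := by omega
          rw [this, pow_one]
          ring
        rw [harr, PowerSeries.coeff_mul_C, Nat.choose_succ_self_right]
        push_cast
        ring
      rw [t1, t2]
      have : (b' + 1 : ℕ) - 1 = b' := by omega
      rw [this]
      push_cast
      ring

lemma taylor (f : MvPowerSeries (Fin 2) ℂ) {x y ε : PowerSeries ℂ}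
    (hx : oge x 1) (hy : oge y 1)
    {e : ℕ} (he : 1 ≤ e) (hε : oge ε e) {N : ℕ} (hN : N < 2 * e) :
    coeff N (evalArc (x, y + ε) f) =
      coeff N (evalArc (x, y) f) + coeff N (ε * evalArc (x, y) (pd 1 f)) := by
  rw [coeff_evalArc, coeff_evalArc, coeff_mul_evalArc ε hx hy]
  have step : ∀ a ∈ Finset.range (N + 1), ∀ b ∈ Finset.range (N + 1),
      MvPowerSeries.coeff (Finsupp.single 0 a + Finsupp.single 1 b) f *
        coeff N (x ^ a * (y + ε) ^ b) =
      MvPowerSeries.coeff (Finsupp.single 0 a + Finsupp.single 1 b) f *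
        coeff N (x ^ a * y ^ b) +
      MvPowerSeries.coeff (Finsupp.single 0 a + Finsupp.single 1 b) f *
        ((b : ℂ) * coeff N (ε * (x ^ a * y ^ (b - 1)))) := by
    intro a _ b _
    rw [coeff_pow_add hx hy he hε hN a b, mul_add]
  calc (∑ a ∈ Finset.range (N + 1), ∑ b ∈ Finset.range (N + 1),
        MvPowerSeries.coeff (Finsupp.single 0 a + Finsupp.single 1 b) f *
          coeff N (x ^ a * (y + ε) ^ b))
      = (∑ a ∈ Finset.range (N + 1), ∑ b ∈ Finset.range (N + 1),
          MvPowerSeries.coeff (Finsupp.single 0 a + Finsupp.single 1 b) f *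
            coeff N (x ^ a * y ^ b)) +
        (∑ a ∈ Finset.range (N + 1), ∑ b ∈ Finset.range (N + 1),
          MvPowerSeries.coeff (Finsupp.single 0 a + Finsupp.single 1 b) f *
            ((b : ℂ) * coeff N (ε * (x ^ a * y ^ (b - 1))))) := by
        rw [← Finset.sum_add_distrib]
        apply Finset.sum_congr rfl; intro a ha
        rw [← Finset.sum_add_distrib]
        exact Finset.sum_congr rfl (fun b hb => step a ha b hb)
    _ = _ := by
        congr 1
        apply Finset.sum_congr rfl; intro a _
        -- fixed a : compare the b-sums
        rw [Finset.sum_range_succ' (fun b => MvPowerSeries.coeff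
            (Finsupp.single 0 a + Finsupp.single 1 b) f *
            ((b : ℂ) * coeff N (ε * (x ^ a * y ^ (b - 1))))) N]
        simp only [Nat.cast_zero, zero_mul, mul_zero, add_zero]
        rw [Finset.sum_range_succ]
        have hlast : MvPowerSeries.coeff (Finsupp.single 0 a + Finsupp.single 1 N) (pd 1 f) *
            coeff N (ε * (x ^ a * y ^ N)) = 0 := by
          have : oge (ε * (x ^ a * y ^ N)) (e + N) := by
            have h2 : oge (x ^ a * y ^ N) N :=
              oge_mono (by omega : N ≤ a + N) (oge_monomials hx hy a N)
            exact oge_mul hε h2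
          rw [this N (by omega), mul_zero]
        rw [hlast, add_zero]
        apply Finset.sum_congr rfl; intro b _
        rw [coeff_pd1]
        have : (b + 1 : ℕ) - 1 = b := by omega
        rw [this]
        push_cast
        ring

lemma oge_one_of_constantCoeff {z : PowerSeries ℂ} (hz : constantCoeff z = 0) :
    oge z 1 := by
  intro i hi
  have : i = 0 := by omega
  subst this
  rw [PowerSeries.coeff_zero_eq_constantCoeff]
  exact hz

lemma exists_div {u w : PowerSeries ℂ} {Q c : ℕ}
    (hu : oge u Q) (huQ : coeff Q u ≠ 0) (hw : oge w c) (hQc : Q ≤ c) :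
    ∃ δ : PowerSeries ℂ, u * δ = w ∧ oge δ (c - Q) := by
  obtain ⟨u₀, hu₀⟩ := (PowerSeries.X_pow_dvd_iff).2 hu
  obtain ⟨w₀, hw₀⟩ := (PowerSeries.X_pow_dvd_iff).2 hw
  have hcc : constantCoeff u₀ ≠ 0 := by
    have h1 : coeff Q u = constantCoeff u₀ := by
      rw [hu₀]
      have := PowerSeries.coeff_X_pow_mul u₀ Q 0
      simpa [PowerSeries.coeff_zero_eq_constantCoeff] using this
    rwa [h1] at huQ
  have hunit : IsUnit u₀ := PowerSeries.isUnit_iff_constantCoeff.2 (isUnit_iff_ne_zero.2 hcc)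
  obtain ⟨v, hv⟩ := hunit
  set vi : ℂ⟦X⟧ := ((v⁻¹ : ℂ⟦X⟧ˣ) : ℂ⟦X⟧) with hvi
  have hvv : u₀ * vi = 1 := by rw [hvi, ← hv]; exact v.mul_inv
  refine ⟨X ^ (c - Q) * (vi * w₀), ?_, ?_⟩
  · rw [hu₀]
    calc X ^ Q * u₀ * (X ^ (c - Q) * (vi * w₀))
        = (X ^ Q * X ^ (c - Q)) * ((u₀ * vi) * w₀) := by ring
      _ = w := by
          rw [← pow_add, (by omega : Q + (c - Q) = c), hvv, one_mul]
          exact hw₀.symm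
  · intro i hi
    exact (PowerSeries.X_pow_dvd_iff.1 ⟨_, rfl⟩) i hi

/-- invariant of the Newton iteration -/
def good (f : MvPowerSeries (Fin 2) ℂ) (x y : PowerSeries ℂ) (Q c₀ k : ℕ)
    (z : PowerSeries ℂ) : Prop :=
  constantCoeff z = 0 ∧ oge (evalArc (x, z) f) (c₀ + k) ∧
    ∀ i < c₀ - Q, coeff i z = coeff i y

lemma newton_step (f : MvPowerSeries (Fin 2) ℂ) (x y : PowerSeries ℂ)
    (hx1 : oge x 1) (Q c₀ : ℕ) (hc : 2 * Q + 1 ≤ c₀)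
    (hu : oge (evalArc (x, y) (pd 1 f)) Q)
    (huQ : coeff Q (evalArc (x, y) (pd 1 f)) ≠ 0)
    (k : ℕ) (z : PowerSeries ℂ) (hz : good f x y Q c₀ k z) :
    ∃ z', good f x y Q c₀ (k + 1) z' ∧
      ∀ i < c₀ + k - Q, coeff i z' = coeff i z := by
  obtain ⟨hz0, hzf, hzy⟩ := hz
  have hz1 : oge z 1 := oge_one_of_constantCoeff hz0
  have hjets : ∀ i ≤ Q, coeff i z = coeff i y := fun i hi => hzy i (by omega)
  have hjeq : ∀ i ≤ Q, coeff i (evalArc (x, z) (pd 1 f)) =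
      coeff i (evalArc (x, y) (pd 1 f)) :=
    jeq_evalArc (fun _ _ => rfl) hjets (pd 1 f)
  have huz : oge (evalArc (x, z) (pd 1 f)) Q := by
    intro i hi
    rw [hjeq i (le_of_lt hi)]
    exact hu i hi
  have huzQ : coeff Q (evalArc (x, z) (pd 1 f)) ≠ 0 := by
    rw [hjeq Q le_rfl]; exact huQ
  obtain ⟨δ, hδmul, hδo⟩ := exists_div huz huzQ hzf (by omega : Q ≤ c₀ + k)
  have he : 1 ≤ c₀ + k - Q := by omega
  have hδ0 : coeff 0 δ = 0 := hδo 0 (by omega)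
  refine ⟨z + -δ, ⟨?_, ?_, ?_⟩, ?_⟩
  · rw [map_add, map_neg, hz0, ← PowerSeries.coeff_zero_eq_constantCoeff, hδ0]
    ring
  · intro N hN
    rw [taylor f hx1 hz1 he (oge_neg hδo) (show N < 2 * (c₀ + k - Q) by omega)]
    have hcancel : (-δ) * evalArc (x, z) (pd 1 f) = -(evalArc (x, z) f) := by
      rw [neg_mul, mul_comm, hδmul]
    rw [hcancel, map_neg]
    ring
  · intro i hi
    rw [map_add, map_neg, hδo i (by omega), hzy i hi]
    ring
  · intro i hi
    rw [map_add, map_neg, hδo i hi]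
    ring

open Classical in
noncomputable def nextz (f : MvPowerSeries (Fin 2) ℂ) (x y : PowerSeries ℂ)
    (Q c₀ k : ℕ) (z : PowerSeries ℂ) : PowerSeries ℂ :=
  if h : ∃ z', good f x y Q c₀ (k + 1) z' ∧
      ∀ i < c₀ + k - Q, coeff i z' = coeff i z
  then h.choose else 0

noncomputable def seqz (f : MvPowerSeries (Fin 2) ℂ) (x y : PowerSeries ℂ)
    (Q c₀ : ℕ) : ℕ → PowerSeries ℂ
  | 0 => y
  | (k + 1) => nextz f x y Q c₀ k (seqz f x y Q c₀ k)

lemma newton_main (f : MvPowerSeries (Fin 2) ℂ) (x y : PowerSeries ℂ)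
    (hx : constantCoeff x = 0) (hy : constantCoeff y = 0)
    (Q c₀ : ℕ) (hc : 2 * Q + 1 ≤ c₀)
    (hu : oge (evalArc (x, y) (pd 1 f)) Q)
    (huQ : coeff Q (evalArc (x, y) (pd 1 f)) ≠ 0)
    (hw : oge (evalArc (x, y) f) c₀) :
    ∃ y' : PowerSeries ℂ, constantCoeff y' = 0 ∧ evalArc (x, y') f = 0 ∧
      ∀ i < c₀ - Q, coeff i y' = coeff i y := by
  have hx1 : oge x 1 := oge_one_of_constantCoeff hx
  set Y : ℕ → PowerSeries ℂ := seqz f x y Q c₀ with hYdef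
  have hgood : ∀ k, good f x y Q c₀ k (Y k) := by
    intro k
    induction k with
    | zero =>
        refine ⟨hy, ?_, fun i _ => rfl⟩
        exact hw
    | succ k ih =>
        have hex := newton_step f x y hx1 Q c₀ hc hu huQ k (Y k) ih
        show good f x y Q c₀ (k + 1) (nextz f x y Q c₀ k (Y k))
        unfold nextz
        rw [dif_pos hex]
        exact hex.choose_spec.1
  have hagree : ∀ k, ∀ i < c₀ + k - Q, coeff i (Y (k + 1)) = coeff i (Y k) := by
    intro k
    have hex := newton_step f x y hx1 Q c₀ hc hu huQ k (Y k) (hgood k)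
    show ∀ i < c₀ + k - Q, coeff i (nextz f x y Q c₀ k (Y k)) = coeff i (Y k)
    unfold nextz
    rw [dif_pos hex]
    exact hex.choose_spec.2
  have hstab : ∀ k i, i ≤ k → coeff i (Y k) = coeff i (Y i) := by
    intro k
    induction k with
    | zero =>
        intro i hi
        have h0 : i = 0 := by omega
        subst h0
        rfl
    | succ k ih =>
        intro i hi
        rcases Nat.lt_or_ge i (k + 1) with h | h
        · rw [hagree k i (by omega), ih i (by omega)]
        · have : i = k + 1 := by omega
          subst this; rfl
  refine ⟨PowerSeries.mk (fun i => coeff i (Y i)), ?_, ?_, ?_⟩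
  · rw [← PowerSeries.coeff_zero_eq_constantCoeff, coeff_mk]
    show coeff 0 y = 0
    rw [PowerSeries.coeff_zero_eq_constantCoeff]
    exact hy
  · ext N
    have hjet : ∀ i ≤ N, coeff i (PowerSeries.mk (fun i => coeff i (Y i)))
        = coeff i (Y N) := by
      intro i hi
      rw [coeff_mk, hstab N i hi]
    rw [map_zero]
    rw [jeq_evalArc (fun _ _ => rfl) hjet f N le_rfl]
    exact (hgood N).2.1 N (by omega)
  · intro i hi
    rw [coeff_mk]
    exact (hgood i).2.2 i hi

/-- swap the two variables of a power series in two variables -/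
noncomputable def sw (f : MvPowerSeries (Fin 2) ℂ) : MvPowerSeries (Fin 2) ℂ :=
  fun d => f (Finsupp.mapDomain (Equiv.swap (0 : Fin 2) 1) d)

lemma swap_single (a b : ℕ) :
    Finsupp.mapDomain (Equiv.swap (0 : Fin 2) 1)
      (Finsupp.single 0 a + Finsupp.single 1 b) =
      Finsupp.single 0 b + Finsupp.single 1 a := by
  rw [Finsupp.mapDomain_add, Finsupp.mapDomain_single, Finsupp.mapDomain_single,
    Equiv.swap_apply_left, Equiv.swap_apply_right, add_comm]

lemma sw_coeff (f : MvPowerSeries (Fin 2) ℂ) (a b : ℕ) :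
    MvPowerSeries.coeff (Finsupp.single 0 a + Finsupp.single 1 b) (sw f) =
      MvPowerSeries.coeff (Finsupp.single 0 b + Finsupp.single 1 a) f := by
  rw [MvPowerSeries.coeff_apply, MvPowerSeries.coeff_apply]
  show f _ = f _
  rw [swap_single]

lemma evalArc_sw (x y : PowerSeries ℂ) (f : MvPowerSeries (Fin 2) ℂ) :
    evalArc (x, y) (sw f) = evalArc (y, x) f := by
  ext N
  rw [coeff_evalArc, coeff_evalArc]
  calc (∑ a ∈ Finset.range (N + 1), ∑ b ∈ Finset.range (N + 1),
        MvPowerSeries.coeff (Finsupp.single 0 a + Finsupp.single 1 b) (sw f) *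
          coeff N (x ^ a * y ^ b))
      = ∑ a ∈ Finset.range (N + 1), ∑ b ∈ Finset.range (N + 1),
        MvPowerSeries.coeff (Finsupp.single 0 b + Finsupp.single 1 a) f *
          coeff N (x ^ a * y ^ b) := by
        apply Finset.sum_congr rfl; intro a _
        apply Finset.sum_congr rfl; intro b _
        rw [sw_coeff]
    _ = _ := by
        rw [Finset.sum_comm]
        apply Finset.sum_congr rfl; intro a _
        apply Finset.sum_congr rfl; intro b _
        rw [mul_comm (x ^ b) (y ^ a)]

lemma mapDomain_swap_apply (d : Fin 2 →₀ ℕ) :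
    (Finsupp.mapDomain (Equiv.swap (0 : Fin 2) 1) d) 0 = d 1 := by
  rw [Finsupp.mapDomain_equiv_apply, Equiv.symm_swap, Equiv.swap_apply_left]

lemma pd1_sw (f : MvPowerSeries (Fin 2) ℂ) : pd 1 (sw f) = sw (pd 0 f) := by
  funext d
  show ((d 1 : ℂ) + 1) * sw f (d + Finsupp.single 1 1) = pd 0 f (Finsupp.mapDomain _ d)
  show ((d 1 : ℂ) + 1) * f (Finsupp.mapDomain (Equiv.swap (0 : Fin 2) 1)
      (d + Finsupp.single 1 1)) =
    (((Finsupp.mapDomain (Equiv.swap (0 : Fin 2) 1) d) 0 : ℂ) + 1) *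
      f (Finsupp.mapDomain (Equiv.swap (0 : Fin 2) 1) d + Finsupp.single 0 1)
  rw [mapDomain_swap_apply]
  rw [Finsupp.mapDomain_add]
  rw [Finsupp.mapDomain_single]
  rw [Equiv.swap_apply_right]

lemma sw_jet (f g : MvPowerSeries (Fin 2) ℂ) (n : ℕ)
    (hjet : ∀ d : Fin 2 →₀ ℕ, d 0 + d 1 ≤ n →
      MvPowerSeries.coeff d f = MvPowerSeries.coeff d g) :
    ∀ d : Fin 2 →₀ ℕ, d 0 + d 1 ≤ n →
      MvPowerSeries.coeff d (sw f) = MvPowerSeries.coeff d (sw g) := by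
  intro d hd
  show f _ = g _
  refine hjet _ ?_
  rw [mapDomain_swap_apply]
  have : (Finsupp.mapDomain (Equiv.swap (0 : Fin 2) 1) d) 1 = d 0 := by
    rw [Finsupp.mapDomain_equiv_apply, Equiv.symm_swap, Equiv.swap_apply_right]
  rw [this]
  omega

/-- the initial order bound coming from the jet solution -/
lemma init_bound (f g : MvPowerSeries (Fin 2) ℂ) (x y : PowerSeries ℂ)
    (hg : evalArc (x, y) g = 0) (n : ℕ)
    (hjet : ∀ d : Fin 2 →₀ ℕ, d 0 + d 1 ≤ n →
      MvPowerSeries.coeff d f = MvPowerSeries.coeff d g)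
    (m : ℕ) (hxm : oge x m) (hym : oge y m) :
    oge (evalArc (x, y) f) (m * (n + 1)) := by
  intro N hN
  have h0 : coeff N (evalArc (x, y) f) =
      coeff N (evalArc (x, y) f) - coeff N (evalArc (x, y) g) := by
    rw [hg, map_zero, sub_zero]
  rw [h0, coeff_evalArc, coeff_evalArc, ← Finset.sum_sub_distrib]
  apply Finset.sum_eq_zero; intro a _
  rw [← Finset.sum_sub_distrib]
  apply Finset.sum_eq_zero; intro b _
  rcases le_or_gt (a + b) n with hab | hab
  · have hd : ((Finsupp.single 0 a + Finsupp.single 1 b : Fin 2 →₀ ℕ) 0)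
        + ((Finsupp.single 0 a + Finsupp.single 1 b : Fin 2 →₀ ℕ) 1) ≤ n := by
      simp only [Finsupp.add_apply, Finsupp.single_apply]
      simpa using hab
    rw [hjet _ hd]
    ring
  · have hz : coeff N (x ^ a * y ^ b) = 0 := by
      have ho := oge_mul (oge_pow hxm a) (oge_pow hym b)
      apply ho
      have h1 : m * (n + 1) ≤ m * (a + b) := Nat.mul_le_mul_left m (by omega)
      have h2 : m * (a + b) = m * a + m * b := by ring
      omega
    rw [hz]
    ring

end NewtonAux

open NewtonAux in
/-- Lemma 4, Newton approximation: if `g(γ(t)) = 0`, the `n`-jets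
of `f` and `g` coincide, `m = ord₀ γ`,
`Q = min(ord₀ f_x(γ(t)), ord₀ f_y(γ(t)))` and `n > 4Q`, then there is an arc
`γ'` with `f(γ'(t)) = 0` whose `(mn - Q)`-jet coincides with that of `γ`. -/
theorem newton_approximation_of_jet_solution
    (f g : MvPowerSeries (Fin 2) ℂ) (x y : PowerSeries ℂ)
    (hx0 : constantCoeff x = 0) (hy0 : constantCoeff y = 0)
    (hg : evalArc (x, y) g = 0)
    (n : ℕ)
    (hjet : ∀ d : Fin 2 →₀ ℕ, d 0 + d 1 ≤ n →
      MvPowerSeries.coeff d f = MvPowerSeries.coeff d g)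
    (m : ℕ) (hm : min x.order y.order = (m : ℕ∞))
    (Q : ℕ)
    (hQ : min (evalArc (x, y) (pd 0 f)).order (evalArc (x, y) (pd 1 f)).order
      = (Q : ℕ∞))
    (hn : n > 4 * Q) :
    ∃ x' y' : PowerSeries ℂ, constantCoeff x' = 0 ∧ constantCoeff y' = 0 ∧
      evalArc (x', y') f = 0 ∧
      ∀ i ≤ m * n - Q, coeff i x' = coeff i x ∧ coeff i y' = coeff i y := by
  have hxo : (m : ℕ∞) ≤ x.order := hm ▸ min_le_left _ _
  have hyo : (m : ℕ∞) ≤ y.order := hm ▸ min_le_right _ _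
  have hxm : oge x m := fun i hi =>
    PowerSeries.coeff_of_lt_order i (lt_of_lt_of_le (Nat.cast_lt.mpr hi) hxo)
  have hym : oge y m := fun i hi =>
    PowerSeries.coeff_of_lt_order i (lt_of_lt_of_le (Nat.cast_lt.mpr hi) hyo)
  have hm1 : 1 ≤ m := by
    by_contra h
    have hm0 : m = 0 := by omega
    subst hm0
    rcases min_eq_iff.mp hm with ⟨h1, _⟩ | ⟨h1, _⟩
    · have h2 := (PowerSeries.order_eq_nat.mp (by exact_mod_cast h1)).1
      rw [PowerSeries.coeff_zero_eq_constantCoeff] at h2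
      exact h2 hx0
    · have h2 := (PowerSeries.order_eq_nat.mp (by exact_mod_cast h1)).1
      rw [PowerSeries.coeff_zero_eq_constantCoeff] at h2
      exact h2 hy0
  have hw : oge (evalArc (x, y) f) (m * (n + 1)) := init_bound f g x y hg n hjet m hxm hym
  have hkey : n + 1 ≤ m * (n + 1) := Nat.le_mul_of_pos_left (n + 1) (by omega)
  have hc : 2 * Q + 1 ≤ m * (n + 1) := by omega
  have hQle0 : (Q : ℕ∞) ≤ (evalArc (x, y) (pd 0 f)).order := hQ ▸ min_le_left _ _
  have hQle1 : (Q : ℕ∞) ≤ (evalArc (x, y) (pd 1 f)).order := hQ ▸ min_le_right _ _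
  have hbound : ∀ i : ℕ, i ≤ m * n - Q → i < m * (n + 1) - Q := by
    have h1 : m * (n + 1) = m * n + m := by ring
    intro i hi
    omega
  rcases min_eq_iff.mp hQ with ⟨h1, _⟩ | ⟨h1, _⟩
  · -- the x-partial achieves order Q : swap the variables
    have huQ : coeff Q (evalArc (x, y) (pd 0 f)) ≠ 0 :=
      (PowerSeries.order_eq_nat.mp (by exact_mod_cast h1)).1
    have hu : oge (evalArc (y, x) (pd 1 (sw f))) Q := by
      rw [pd1_sw, evalArc_sw]
      intro i hi
      exact PowerSeries.coeff_of_lt_order i (lt_of_lt_of_le (Nat.cast_lt.mpr hi) hQle0)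
    have huQ' : coeff Q (evalArc (y, x) (pd 1 (sw f))) ≠ 0 := by
      rw [pd1_sw, evalArc_sw]; exact huQ
    have hw' : oge (evalArc (y, x) (sw f)) (m * (n + 1)) := by
      rw [evalArc_sw]; exact hw
    obtain ⟨x', hx'0, hx'f, hx'jet⟩ :=
      newton_main (sw f) y x hy0 hx0 Q (m * (n + 1)) hc hu huQ' hw'
    refine ⟨x', y, hx'0, hy0, ?_, ?_⟩
    · rw [← evalArc_sw y x' f]
      exact hx'f
    · intro i hi
      exact ⟨hx'jet i (hbound i hi), rfl⟩
  · -- the y-partial achieves order Q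
    have huQ : coeff Q (evalArc (x, y) (pd 1 f)) ≠ 0 :=
      (PowerSeries.order_eq_nat.mp (by exact_mod_cast h1)).1
    have hu : oge (evalArc (x, y) (pd 1 f)) Q := fun i hi =>
      PowerSeries.coeff_of_lt_order i (lt_of_lt_of_le (Nat.cast_lt.mpr hi) hQle1)
    obtain ⟨y', hy'0, hy'f, hy'jet⟩ :=
      newton_main f x y hx0 hy0 Q (m * (n + 1)) hc hu huQ hw
    refine ⟨x, y', hx0, hy'0, hy'f, ?_⟩
    intro i hi
    exact ⟨rfl, hy'jet i (hbound i hi)⟩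
end

section
/- Behavior of P − v under blow-up for an irreducible germ: if γ is an irreducible plane curve germ of multiplicity v with strict transform γ̂ under blowing up the origin (in the chart y = θx, with f̂ = x^{−v} f(x, θx)), then P(γ̂) − v(γ̂) = P(γ) − v(γ) − v(v−1). -/
open PowerSeries

/-- Substitution `f(u, w)` of two power series `u, w ∈ ℂ[[x,y]]` without
constant term into `f ∈ ℂ[[x,y]]`. -/
noncomputable def evalPair (u w : MvPowerSeries (Fin 2) ℂ)
    (f : MvPowerSeries (Fin 2) ℂ) : MvPowerSeries (Fin 2) ℂ :=
  fun m => ∑ a ∈ Finset.range (m 0 + m 1 + 1), ∑ b ∈ Finset.range (m 0 + m 1 + 1),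
    MvPowerSeries.coeff (Finsupp.single 0 a + Finsupp.single 1 b) f *
      MvPowerSeries.coeff m (u ^ a * w ^ b)

section Aux
open Finset

lemma coeff_derivativeFun (f : PowerSeries ℂ) (n : ℕ) :
    PowerSeries.coeff n (derivativeFun f) = PowerSeries.coeff (n + 1) f * (n + 1) :=
  coeff_derivative f n

noncomputable def D (a b : ℕ) : Fin 2 →₀ ℕ := Finsupp.single 0 a + Finsupp.single 1 b

@[simp] lemma D_apply0 (a b : ℕ) : D a b 0 = a := by simp [D, Finsupp.single_apply]
@[simp] lemma D_apply1 (a b : ℕ) : D a b 1 = b := by simp [D, Finsupp.single_apply]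

lemma order_neg' (φ : PowerSeries ℂ) : (-φ).order = φ.order := by
  cases hφ : φ.order with
  | top => rw [order_eq_top] at hφ; simp [hφ]
  | coe n =>
    rw [order_eq_nat] at hφ ⊢
    exact ⟨by simpa using hφ.1, fun i hi => by simpa using hφ.2 i hi⟩

lemma coeff_vanish {x y : PowerSeries ℂ} (hx : constantCoeff x = 0)
    (hy : constantCoeff y = 0) {n a b : ℕ} (h : n < a + b) :
    PowerSeries.coeff n (x ^ a * y ^ b) = 0 := by
  have hdvd : (X : PowerSeries ℂ) ^ (a + b) ∣ x ^ a * y ^ b := by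
    rw [pow_add]
    exact mul_dvd_mul (pow_dvd_pow_of_dvd (X_dvd_iff.2 hx) a)
      (pow_dvd_pow_of_dvd (X_dvd_iff.2 hy) b)
  exact X_pow_dvd_iff.1 hdvd n h

lemma coeff_vanish' {x y : PowerSeries ℂ} (hx : constantCoeff x = 0)
    (hy : constantCoeff y = 0) (z : PowerSeries ℂ) {n a b : ℕ} (h : n < a + b) :
    PowerSeries.coeff n (z * (x ^ a * y ^ b)) = 0 := by
  have hdvd : (X : PowerSeries ℂ) ^ (a + b) ∣ z * (x ^ a * y ^ b) := by
    refine Dvd.dvd.mul_left ?_ z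
    rw [pow_add]
    exact mul_dvd_mul (pow_dvd_pow_of_dvd (X_dvd_iff.2 hx) a)
      (pow_dvd_pow_of_dvd (X_dvd_iff.2 hy) b)
  exact X_pow_dvd_iff.1 hdvd n h

lemma sum_ext {x y : PowerSeries ℂ} (hx : constantCoeff x = 0)
    (hy : constantCoeff y = 0) (c : ℕ → ℕ → ℂ) {n N : ℕ} (h : n ≤ N) :
    ∑ a ∈ range (n+1), ∑ b ∈ range (n+1), c a b * PowerSeries.coeff n (x ^ a * y ^ b)
    = ∑ a ∈ range (N+1), ∑ b ∈ range (N+1), c a b * PowerSeries.coeff n (x ^ a * y ^ b) := by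
  rw [Finset.sum_subset (Finset.range_subset_range.mpr (Nat.succ_le_succ h))]
  · apply Finset.sum_congr rfl
    intro a ha
    rw [Finset.sum_subset (Finset.range_subset_range.mpr (Nat.succ_le_succ h))]
    intro b hb hb'
    rw [coeff_vanish hx hy, mul_zero]
    simp only [mem_range, not_lt] at hb'
    omega
  · intro a ha ha'
    simp only [mem_range, not_lt] at ha'
    apply Finset.sum_eq_zero
    intro b hb
    rw [coeff_vanish hx hy, mul_zero]
    omega

lemma coeff_evalArc (x y : PowerSeries ℂ) (f : MvPowerSeries (Fin 2) ℂ) (n : ℕ) :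
    PowerSeries.coeff n (evalArc (x, y) f)
    = ∑ a ∈ range (n+1), ∑ b ∈ range (n+1),
        MvPowerSeries.coeff (D a b) f * PowerSeries.coeff n (x ^ a * y ^ b) := by
  simp [evalArc, D, coeff_mk]

lemma pd_coeff_apply (i : Fin 2) (f : MvPowerSeries (Fin 2) ℂ) (m : Fin 2 →₀ ℕ) :
    MvPowerSeries.coeff m (pd i f)
    = ((m i : ℂ) + 1) * MvPowerSeries.coeff (m + Finsupp.single i 1) f := rfl

lemma evalArc_X0_mul {x y : PowerSeries ℂ} (hx : constantCoeff x = 0)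
    (hy : constantCoeff y = 0) (g : MvPowerSeries (Fin 2) ℂ) :
    evalArc (x, y) (MvPowerSeries.X 0 * g) = x * evalArc (x, y) g := by
  ext n
  have hco : ∀ a b : ℕ, MvPowerSeries.coeff (D a b) (MvPowerSeries.X 0 * g)
      = if 1 ≤ a then MvPowerSeries.coeff (D (a-1) b) g else 0 := by
    intro a b
    rw [show (MvPowerSeries.X 0 * g : MvPowerSeries (Fin 2) ℂ)
        = MvPowerSeries.monomial (Finsupp.single 0 1) 1 * g from rfl,
      MvPowerSeries.coeff_monomial_mul]
    have hiff : Finsupp.single (0:Fin 2) 1 ≤ D a b ↔ 1 ≤ a := by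
      rw [Finsupp.single_le_iff]; simp [D, Finsupp.single_apply]
    by_cases h1 : 1 ≤ a
    · have hsub : D a b - Finsupp.single 0 1 = D (a-1) b := by
        ext i; fin_cases i <;> simp [D, Finsupp.tsub_apply, Finsupp.single_apply]
      rw [if_pos (hiff.2 h1), if_pos h1, one_mul, hsub]
    · rw [if_neg (fun h => h1 (hiff.1 h)), if_neg h1]
  have hL : PowerSeries.coeff n (evalArc (x, y) (MvPowerSeries.X 0 * g))
      = ∑ a ∈ range n, ∑ b ∈ range (n+1),
          MvPowerSeries.coeff (D a b) g * PowerSeries.coeff n (x ^ (a+1) * y ^ b) := by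
    rw [coeff_evalArc]
    simp only [hco, ite_mul, zero_mul]
    rw [Finset.sum_range_succ']
    simp only [Nat.le_add_left 1, if_pos, Nat.add_sub_cancel,
      if_neg (by omega : ¬ (1:ℕ) ≤ 0)]
    rw [Finset.sum_const_zero, add_zero]
  have hR : PowerSeries.coeff n (x * evalArc (x, y) g)
      = ∑ a ∈ range n, ∑ b ∈ range (n+1),
          MvPowerSeries.coeff (D a b) g * PowerSeries.coeff n (x ^ (a+1) * y ^ b) := by
    calc PowerSeries.coeff n (x * evalArc (x, y) g)
        = ∑ p ∈ Finset.HasAntidiagonal.antidiagonal n, PowerSeries.coeff p.1 x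
            * PowerSeries.coeff p.2 (evalArc (x,y) g) := PowerSeries.coeff_mul _ _ _
      _ = ∑ p ∈ Finset.HasAntidiagonal.antidiagonal n, ∑ a ∈ range (n+1), ∑ b ∈ range (n+1),
            MvPowerSeries.coeff (D a b) g
              * (PowerSeries.coeff p.1 x * PowerSeries.coeff p.2 (x ^ a * y ^ b)) := by
          refine Finset.sum_congr rfl fun p hp => ?_
          have hp2 : p.2 ≤ n := by
            rw [Finset.HasAntidiagonal.mem_antidiagonal] at hp; omega
          rw [coeff_evalArc, sum_ext hx hy _ hp2, Finset.mul_sum]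
          refine Finset.sum_congr rfl fun a _ => ?_
          rw [Finset.mul_sum]
          refine Finset.sum_congr rfl fun b _ => ?_
          ring
      _ = ∑ a ∈ range (n+1), ∑ p ∈ Finset.HasAntidiagonal.antidiagonal n, ∑ b ∈ range (n+1),
            MvPowerSeries.coeff (D a b) g
              * (PowerSeries.coeff p.1 x * PowerSeries.coeff p.2 (x ^ a * y ^ b)) :=
          Finset.sum_comm
      _ = ∑ a ∈ range (n+1), ∑ b ∈ range (n+1),
            MvPowerSeries.coeff (D a b) g * PowerSeries.coeff n (x ^ (a+1) * y ^ b) := by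
          refine Finset.sum_congr rfl fun a _ => ?_
          rw [Finset.sum_comm]
          refine Finset.sum_congr rfl fun b _ => ?_
          rw [← Finset.mul_sum, ← PowerSeries.coeff_mul]
          congr 2
          ring
      _ = ∑ a ∈ range n, ∑ b ∈ range (n+1),
            MvPowerSeries.coeff (D a b) g * PowerSeries.coeff n (x ^ (a+1) * y ^ b) := by
          rw [Finset.sum_range_succ]
          have hz : ∑ b ∈ range (n+1), MvPowerSeries.coeff (D n b) g
              * PowerSeries.coeff n (x ^ (n+1) * y ^ b) = 0 := by
            apply Finset.sum_eq_zero; intro b _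
            rw [coeff_vanish hx hy (by omega), mul_zero]
          rw [hz, add_zero]
  rw [hL, hR]

lemma coeff_mul_evalArc {x y : PowerSeries ℂ} (hx : constantCoeff x = 0)
    (hy : constantCoeff y = 0) (z : PowerSeries ℂ) (g : MvPowerSeries (Fin 2) ℂ) (n : ℕ) :
    PowerSeries.coeff n (z * evalArc (x, y) g)
    = ∑ a ∈ range (n+1), ∑ b ∈ range (n+1),
        MvPowerSeries.coeff (D a b) g * PowerSeries.coeff n (z * (x ^ a * y ^ b)) := by
  calc PowerSeries.coeff n (z * evalArc (x, y) g)
      = ∑ p ∈ Finset.HasAntidiagonal.antidiagonal n, PowerSeries.coeff p.1 z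
          * PowerSeries.coeff p.2 (evalArc (x,y) g) := PowerSeries.coeff_mul _ _ _
    _ = ∑ p ∈ Finset.HasAntidiagonal.antidiagonal n, ∑ a ∈ range (n+1), ∑ b ∈ range (n+1),
          MvPowerSeries.coeff (D a b) g
            * (PowerSeries.coeff p.1 z * PowerSeries.coeff p.2 (x ^ a * y ^ b)) := by
        refine Finset.sum_congr rfl fun p hp => ?_
        have hp2 : p.2 ≤ n := by
          rw [Finset.HasAntidiagonal.mem_antidiagonal] at hp; omega
        rw [coeff_evalArc, sum_ext hx hy _ hp2, Finset.mul_sum]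
        refine Finset.sum_congr rfl fun a _ => ?_
        rw [Finset.mul_sum]
        refine Finset.sum_congr rfl fun b _ => ?_
        ring
    _ = ∑ a ∈ range (n+1), ∑ p ∈ Finset.HasAntidiagonal.antidiagonal n, ∑ b ∈ range (n+1),
          MvPowerSeries.coeff (D a b) g
            * (PowerSeries.coeff p.1 z * PowerSeries.coeff p.2 (x ^ a * y ^ b)) :=
        Finset.sum_comm
    _ = ∑ a ∈ range (n+1), ∑ b ∈ range (n+1),
          MvPowerSeries.coeff (D a b) g * PowerSeries.coeff n (z * (x ^ a * y ^ b)) := by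
        refine Finset.sum_congr rfl fun a _ => ?_
        rw [Finset.sum_comm]
        refine Finset.sum_congr rfl fun b _ => ?_
        rw [← Finset.mul_sum, ← PowerSeries.coeff_mul]

-- pd coefficients
lemma pd0_coeff (f : MvPowerSeries (Fin 2) ℂ) (a b : ℕ) :
    MvPowerSeries.coeff (D a b) (pd 0 f) = ((a:ℂ)+1) * MvPowerSeries.coeff (D (a+1) b) f := by
  have h : D a b + Finsupp.single 0 1 = D (a+1) b := by
    ext i; fin_cases i <;> simp [D, Finsupp.single_apply]
  show ((D a b 0 : ℂ) + 1) * _ = _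
  rw [h]
  norm_num [D, Finsupp.single_apply]

lemma pd1_coeff (f : MvPowerSeries (Fin 2) ℂ) (a b : ℕ) :
    MvPowerSeries.coeff (D a b) (pd 1 f) = ((b:ℂ)+1) * MvPowerSeries.coeff (D a (b+1)) f := by
  have h : D a b + Finsupp.single 1 1 = D a (b+1) := by
    ext i; fin_cases i <;> simp [D, Finsupp.single_apply]
  show ((D a b 1 : ℂ) + 1) * _ = _
  rw [h]
  norm_num [D, Finsupp.single_apply]

-- derivative of a power
lemma dF_pow (x : PowerSeries ℂ) (a : ℕ) :
    derivativeFun (x ^ (a+1)) = (a+1 : ℕ) • (x ^ a * derivativeFun x) := by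
  induction a with
  | zero => simp
  | succ a ih =>
    rw [pow_succ, derivativeFun_mul, ih]
    simp only [nsmul_eq_mul, smul_eq_mul]
    push_cast
    ring

lemma arc_chain_rule {x y : PowerSeries ℂ} (hx : constantCoeff x = 0)
    (hy : constantCoeff y = 0) (f : MvPowerSeries (Fin 2) ℂ) :
    derivativeFun (evalArc (x, y) f)
    = derivativeFun x * evalArc (x, y) (pd 0 f)
      + derivativeFun y * evalArc (x, y) (pd 1 f) := by
  ext n
  have hB : PowerSeries.coeff n (derivativeFun x * evalArc (x, y) (pd 0 f))
      = ∑ a ∈ range (n+1), ∑ b ∈ range (n+2),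
          ((a:ℂ)+1) * MvPowerSeries.coeff (D (a+1) b) f
            * PowerSeries.coeff n (derivativeFun x * (x ^ a * y ^ b)) := by
    rw [coeff_mul_evalArc hx hy]
    refine Finset.sum_congr rfl fun a _ => ?_
    refine Eq.symm ?_
    rw [Finset.sum_range_succ (n := n+1)]
    rw [coeff_vanish' hx hy _ (by omega), mul_zero, add_zero]
    refine Finset.sum_congr rfl fun b _ => ?_
    rw [pd0_coeff]
  have hC : PowerSeries.coeff n (derivativeFun y * evalArc (x, y) (pd 1 f))
      = ∑ a ∈ range (n+2), ∑ b ∈ range (n+1),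
          ((b:ℂ)+1) * MvPowerSeries.coeff (D a (b+1)) f
            * PowerSeries.coeff n (derivativeFun y * (x ^ a * y ^ b)) := by
    refine Eq.symm ?_
    rw [Finset.sum_range_succ (n := n+1)]
    have hz : ∑ b ∈ range (n+1), ((b:ℂ)+1) * MvPowerSeries.coeff (D (n+1) (b+1)) f
        * PowerSeries.coeff n (derivativeFun y * (x ^ (n+1) * y ^ b)) = 0 := by
      refine Finset.sum_eq_zero fun b _ => ?_
      rw [coeff_vanish' hx hy _ (by omega), mul_zero]
    rw [hz, add_zero, coeff_mul_evalArc hx hy]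
    refine Finset.sum_congr rfl fun a _ => ?_
    refine Finset.sum_congr rfl fun b _ => ?_
    rw [pd1_coeff]
  have e1 : PowerSeries.coeff n (derivativeFun (evalArc (x, y) f))
      = ∑ a ∈ range (n+2), ∑ b ∈ range (n+2),
          MvPowerSeries.coeff (D a b) f
            * (PowerSeries.coeff n (derivativeFun (x ^ a) * y ^ b)
               + PowerSeries.coeff n (x ^ a * derivativeFun (y ^ b))) := by
    rw [coeff_derivativeFun, coeff_evalArc, Finset.sum_mul]
    refine Finset.sum_congr rfl fun a _ => ?_
    rw [Finset.sum_mul]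
    refine Finset.sum_congr rfl fun b _ => ?_
    rw [← map_add,
      show derivativeFun (x ^ a) * y ^ b + x ^ a * derivativeFun (y ^ b)
          = derivativeFun (x ^ a * y ^ b) from by
        rw [derivativeFun_mul]; simp only [smul_eq_mul]; ring,
      coeff_derivativeFun]
    ring
  rw [e1, map_add, hB, hC]
  have split : ∑ a ∈ range (n+2), ∑ b ∈ range (n+2),
        MvPowerSeries.coeff (D a b) f
          * (PowerSeries.coeff n (derivativeFun (x ^ a) * y ^ b)
             + PowerSeries.coeff n (x ^ a * derivativeFun (y ^ b)))
      = (∑ a ∈ range (n+2), ∑ b ∈ range (n+2), MvPowerSeries.coeff (D a b) f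
          * PowerSeries.coeff n (derivativeFun (x ^ a) * y ^ b))
        + ∑ a ∈ range (n+2), ∑ b ∈ range (n+2), MvPowerSeries.coeff (D a b) f
          * PowerSeries.coeff n (x ^ a * derivativeFun (y ^ b)) := by
    rw [← Finset.sum_add_distrib]
    refine Finset.sum_congr rfl fun a _ => ?_
    rw [← Finset.sum_add_distrib]
    refine Finset.sum_congr rfl fun b _ => ?_
    ring
  rw [split]
  congr 1
  · -- x-part
    rw [Finset.sum_range_succ' (fun a => ∑ b ∈ range (n+2), MvPowerSeries.coeff (D a b) f
      * PowerSeries.coeff n (derivativeFun (x ^ a) * y ^ b)) (n+1)]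
    have h0 : ∑ b ∈ range (n+2), MvPowerSeries.coeff (D 0 b) f
        * PowerSeries.coeff n (derivativeFun (x ^ 0) * y ^ b) = 0 := by
      refine Finset.sum_eq_zero fun b _ => ?_
      rw [pow_zero, derivativeFun_one, zero_mul, map_zero, mul_zero]
    rw [h0, add_zero]
    refine Finset.sum_congr rfl fun a _ => ?_
    refine Finset.sum_congr rfl fun b _ => ?_
    rw [dF_pow, smul_mul_assoc, map_nsmul,
      show (x ^ a * derivativeFun x) * y ^ b = derivativeFun x * (x ^ a * y ^ b) from by ring]
    simp only [nsmul_eq_mul, smul_eq_mul]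
    push_cast
    ring
  · -- y-part
    refine Finset.sum_congr rfl fun a _ => ?_
    rw [Finset.sum_range_succ' (fun b => MvPowerSeries.coeff (D a b) f
      * PowerSeries.coeff n (x ^ a * derivativeFun (y ^ b))) (n+1)]
    have h0 : MvPowerSeries.coeff (D a 0) f
        * PowerSeries.coeff n (x ^ a * derivativeFun (y ^ 0)) = 0 := by
      rw [pow_zero, derivativeFun_one, mul_zero, map_zero, mul_zero]
    rw [h0, add_zero]
    refine Finset.sum_congr rfl fun b _ => ?_
    rw [dF_pow,
      show x ^ a * ((b+1) • (y ^ b * derivativeFun y)) = (b+1) • (derivativeFun y * (x ^ a * y ^ b)) from by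
        simp only [nsmul_eq_mul, smul_eq_mul]; push_cast; ring,
      map_nsmul]
    simp only [nsmul_eq_mul, smul_eq_mul]
    push_cast
    ring

lemma m_eq_D_iff (m : Fin 2 →₀ ℕ) (c d : ℕ) : m = D c d ↔ m 0 = c ∧ m 1 = d := by
  constructor
  · rintro rfl; simp [D, Finsupp.single_apply]
  · rintro ⟨h0, h1⟩; ext i; fin_cases i <;> simp [D, Finsupp.single_apply, ← h0, ← h1]

lemma hmon (a b : ℕ) : (MvPowerSeries.X 0 : MvPowerSeries (Fin 2) ℂ) ^ a
    * (MvPowerSeries.X 1 * MvPowerSeries.X 0) ^ b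
    = MvPowerSeries.monomial (D (a+b) b) 1 := by
  rw [mul_pow, MvPowerSeries.X_pow_eq, MvPowerSeries.X_pow_eq, MvPowerSeries.X_pow_eq,
    MvPowerSeries.monomial_mul_monomial, MvPowerSeries.monomial_mul_monomial]
  have : Finsupp.single (0 : Fin 2) a + (Finsupp.single 1 b + Finsupp.single 0 b)
      = D (a+b) b := by
    ext i; fin_cases i <;> simp [D, Finsupp.single_apply]
  rw [this, one_mul, one_mul]

lemma coeff_E (g : MvPowerSeries (Fin 2) ℂ) (m : Fin 2 →₀ ℕ) :
    MvPowerSeries.coeff m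
        (evalPair (MvPowerSeries.X 0) (MvPowerSeries.X 1 * MvPowerSeries.X 0) g)
    = if m 1 ≤ m 0 then MvPowerSeries.coeff (D (m 0 - m 1) (m 1)) g else 0 := by
  show (∑ a ∈ Finset.range (m 0 + m 1 + 1), ∑ b ∈ Finset.range (m 0 + m 1 + 1),
      MvPowerSeries.coeff (Finsupp.single 0 a + Finsupp.single 1 b) g *
        MvPowerSeries.coeff m ((MvPowerSeries.X 0 : MvPowerSeries (Fin 2) ℂ) ^ a
          * (MvPowerSeries.X 1 * MvPowerSeries.X 0) ^ b)) = _
  have step : ∀ a b : ℕ, MvPowerSeries.coeff (Finsupp.single 0 a + Finsupp.single 1 b) g *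
        MvPowerSeries.coeff m ((MvPowerSeries.X 0 : MvPowerSeries (Fin 2) ℂ) ^ a
          * (MvPowerSeries.X 1 * MvPowerSeries.X 0) ^ b)
      = if b = m 1 then (if m 0 = a + b then MvPowerSeries.coeff (D a b) g else 0) else 0 := by
    intro a b
    rw [hmon, MvPowerSeries.coeff_monomial]
    by_cases h : m = D (a+b) b
    · obtain ⟨h0, h1⟩ := (m_eq_D_iff m (a+b) b).1 h
      rw [if_pos h, if_pos h1.symm, if_pos h0, mul_one]
      rfl
    · rw [if_neg h, mul_zero]
      rw [m_eq_D_iff] at h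
      push_neg at h
      by_cases h1 : b = m 1
      · rw [if_pos h1]
        rw [if_neg (fun h0 => h h0 h1.symm)]
      · rw [if_neg h1]
  simp only [step]
  rw [Finset.sum_congr rfl (fun a _ => Finset.sum_ite_eq' (Finset.range (m 0 + m 1 + 1)) (m 1)
    (fun b => if m 0 = a + b then MvPowerSeries.coeff (D a b) g else 0))]
  simp only [Finset.mem_range, if_pos (by omega : m 1 < m 0 + m 1 + 1)]
  by_cases hc : m 1 ≤ m 0
  · rw [if_pos hc]
    have step2 : ∀ a : ℕ, (if m 0 = a + m 1 then MvPowerSeries.coeff (D a (m 1)) g else 0)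
        = if a = m 0 - m 1 then MvPowerSeries.coeff (D a (m 1)) g else 0 := by
      intro a
      by_cases h : m 0 = a + m 1
      · rw [if_pos h, if_pos (by omega)]
      · rw [if_neg h, if_neg (by omega)]
    simp only [step2]
    rw [Finset.sum_ite_eq' (Finset.range (m 0 + m 1 + 1)) (m 0 - m 1)]
    rw [if_pos (by simp only [Finset.mem_range]; omega)]
  · rw [if_neg hc]
    refine Finset.sum_eq_zero fun a _ => ?_
    rw [if_neg (by omega)]


lemma pd1_E (g : MvPowerSeries (Fin 2) ℂ) :
    pd 1 (evalPair (MvPowerSeries.X 0) (MvPowerSeries.X 1 * MvPowerSeries.X 0) g)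
    = MvPowerSeries.X 0
      * evalPair (MvPowerSeries.X 0) (MvPowerSeries.X 1 * MvPowerSeries.X 0) (pd 1 g) := by
  ext m
  rw [pd_coeff_apply, coeff_E]
  rw [show (MvPowerSeries.X 0 * evalPair (MvPowerSeries.X 0)
      (MvPowerSeries.X 1 * MvPowerSeries.X 0) (pd 1 g) : MvPowerSeries (Fin 2) ℂ)
      = MvPowerSeries.monomial (Finsupp.single 0 1) 1
        * evalPair (MvPowerSeries.X 0) (MvPowerSeries.X 1 * MvPowerSeries.X 0) (pd 1 g) from rfl,
    MvPowerSeries.coeff_monomial_mul]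
  have h0 : (m + Finsupp.single 1 1 : Fin 2 →₀ ℕ) 0 = m 0 := by
    rw [Finsupp.add_apply, Finsupp.single_apply]; simp
  have h1 : (m + Finsupp.single 1 1 : Fin 2 →₀ ℕ) 1 = m 1 + 1 := by
    rw [Finsupp.add_apply, Finsupp.single_apply]; simp
  rw [h0, h1]
  have hle : Finsupp.single (0:Fin 2) 1 ≤ m ↔ 1 ≤ m 0 := Finsupp.single_le_iff
  by_cases hc : m 1 + 1 ≤ m 0
  · rw [if_pos hc, if_pos (hle.2 (by omega)), one_mul, coeff_E]
    have hs0 : (m - Finsupp.single 0 1 : Fin 2 →₀ ℕ) 0 = m 0 - 1 := by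
      rw [Finsupp.tsub_apply, Finsupp.single_apply]; simp
    have hs1 : (m - Finsupp.single 0 1 : Fin 2 →₀ ℕ) 1 = m 1 := by
      rw [Finsupp.tsub_apply, Finsupp.single_apply]; simp
    rw [hs0, hs1, if_pos (by omega), pd1_coeff]
    have : m 0 - 1 - m 1 = m 0 - (m 1 + 1) := by omega
    rw [this]
  · rw [if_neg hc]
    by_cases hm0 : 1 ≤ m 0
    · rw [if_pos (hle.2 hm0), one_mul, coeff_E]
      have hs0 : (m - Finsupp.single 0 1 : Fin 2 →₀ ℕ) 0 = m 0 - 1 := by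
        rw [Finsupp.tsub_apply, Finsupp.single_apply]; simp
      have hs1 : (m - Finsupp.single 0 1 : Fin 2 →₀ ℕ) 1 = m 1 := by
        rw [Finsupp.tsub_apply, Finsupp.single_apply]; simp
      rw [hs0, hs1, if_neg (by omega), mul_zero]
    · rw [if_neg (fun h => hm0 (hle.1 h)), mul_zero]

lemma pd1_X0pow_mul (v : ℕ) (h : MvPowerSeries (Fin 2) ℂ) :
    pd 1 ((MvPowerSeries.X 0 : MvPowerSeries (Fin 2) ℂ) ^ v * h)
    = (MvPowerSeries.X 0 : MvPowerSeries (Fin 2) ℂ) ^ v * pd 1 h := by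
  ext m
  rw [pd_coeff_apply,
    show ((MvPowerSeries.X 0 : MvPowerSeries (Fin 2) ℂ) ^ v * h)
      = MvPowerSeries.monomial (Finsupp.single 0 v) 1 * h from by rw [MvPowerSeries.X_pow_eq],
    show ((MvPowerSeries.X 0 : MvPowerSeries (Fin 2) ℂ) ^ v * pd 1 h)
      = MvPowerSeries.monomial (Finsupp.single 0 v) 1 * pd 1 h from by rw [MvPowerSeries.X_pow_eq],
    MvPowerSeries.coeff_monomial_mul, MvPowerSeries.coeff_monomial_mul]
  have hle : Finsupp.single (0:Fin 2) v ≤ m + Finsupp.single 1 1 ↔ v ≤ m 0 := by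
    rw [Finsupp.single_le_iff]; simp [Finsupp.single_apply]
  have hle2 : Finsupp.single (0:Fin 2) v ≤ m ↔ v ≤ m 0 := Finsupp.single_le_iff
  by_cases hc : v ≤ m 0
  · rw [if_pos (hle.2 hc), if_pos (hle2.2 hc), one_mul, one_mul, pd_coeff_apply]
    have h1 : (m - Finsupp.single 0 v : Fin 2 →₀ ℕ) 1 = m 1 := by
      rw [Finsupp.tsub_apply, Finsupp.single_apply]; simp
    rw [h1]
    have hix : m + Finsupp.single 1 1 - Finsupp.single 0 v
        = m - Finsupp.single 0 v + Finsupp.single 1 1 := by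
      ext i; fin_cases i <;>
        simp [Finsupp.tsub_apply, Finsupp.add_apply, Finsupp.single_apply]
    rw [hix]
  · rw [if_neg (fun h => hc (hle.1 h)), if_neg (fun h => hc (hle2.1 h)), mul_zero]

lemma evalArc_X0pow_mul {x y : PowerSeries ℂ} (hx : constantCoeff x = 0)
    (hy : constantCoeff y = 0) (g : MvPowerSeries (Fin 2) ℂ) (k : ℕ) :
    evalArc (x, y) ((MvPowerSeries.X 0 : MvPowerSeries (Fin 2) ℂ) ^ k * g)
    = x ^ k * evalArc (x, y) g := by
  induction k with
  | zero => rw [pow_zero, pow_zero, one_mul, one_mul]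
  | succ k ih =>
    rw [show (MvPowerSeries.X 0 : MvPowerSeries (Fin 2) ℂ) ^ (k+1) * g
        = MvPowerSeries.X 0 * ((MvPowerSeries.X 0 : MvPowerSeries (Fin 2) ℂ) ^ k * g) from by ring,
      evalArc_X0_mul hx hy, ih]
    ring

lemma evalArc_comp {x θ : PowerSeries ℂ} (hx : constantCoeff x = 0)
    (hθ : constantCoeff θ = 0) (g : MvPowerSeries (Fin 2) ℂ) :
    evalArc (x, θ) (evalPair (MvPowerSeries.X 0) (MvPowerSeries.X 1 * MvPowerSeries.X 0) g)
    = evalArc (x, x * θ) g := by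
  ext n
  rw [coeff_evalArc, coeff_evalArc]
  simp only [coeff_E, D_apply0, D_apply1]
  rw [← Finset.sum_product', ← Finset.sum_product']
  rw [show (∑ p ∈ Finset.range (n+1) ×ˢ Finset.range (n+1),
      (if p.2 ≤ p.1 then MvPowerSeries.coeff (D (p.1 - p.2) p.2) g else 0)
        * PowerSeries.coeff n (x ^ p.1 * θ ^ p.2))
    = ∑ p ∈ (Finset.range (n+1) ×ˢ Finset.range (n+1)).filter (fun p => p.2 ≤ p.1),
        MvPowerSeries.coeff (D (p.1 - p.2) p.2) g
          * PowerSeries.coeff n (x ^ p.1 * θ ^ p.2) from by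
      rw [Finset.sum_filter]
      exact Finset.sum_congr rfl fun p _ => by rw [ite_mul, zero_mul]]
  rw [show (∑ p ∈ Finset.range (n+1) ×ˢ Finset.range (n+1),
      MvPowerSeries.coeff (D p.1 p.2) g * PowerSeries.coeff n (x ^ p.1 * (x*θ) ^ p.2))
    = ∑ p ∈ (Finset.range (n+1) ×ˢ Finset.range (n+1)).filter (fun p => p.1 + p.2 ≤ n),
        MvPowerSeries.coeff (D p.1 p.2) g
          * PowerSeries.coeff n (x ^ (p.1+p.2) * θ ^ p.2) from by
      rw [Finset.sum_filter]
      refine Finset.sum_congr rfl fun p _ => ?_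
      by_cases h : p.1 + p.2 ≤ n
      · rw [if_pos h]
        congr 1
        rw [mul_pow, pow_add]
        ring
      · rw [if_neg h]
        rw [show x ^ p.1 * (x*θ) ^ p.2 = x ^ (p.1+p.2) * θ ^ p.2 from by rw [mul_pow, pow_add]; ring]
        rw [coeff_vanish hx hθ (by omega), mul_zero]]
  refine Finset.sum_nbij' (fun p => (p.1 - p.2, p.2)) (fun q => (q.1 + q.2, q.2)) ?_ ?_ ?_ ?_ ?_
  · intro p hp
    simp only [Finset.mem_filter, Finset.mem_product, Finset.mem_range] at hp ⊢
    omega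
  · intro q hq
    simp only [Finset.mem_filter, Finset.mem_product, Finset.mem_range] at hq ⊢
    omega
  · intro p hp
    simp only [Finset.mem_filter, Finset.mem_product, Finset.mem_range] at hp
    have : p.1 - p.2 + p.2 = p.1 := by omega
    simp [this]
  · intro q hq
    simp
  · intro p hp
    simp only [Finset.mem_filter, Finset.mem_product, Finset.mem_range] at hp
    have : p.1 - p.2 + p.2 = p.1 := by omega
    rw [this]


lemma natCast_min (m n : ℕ) : ((min m n : ℕ) : ℕ∞) = min (m:ℕ∞) (n:ℕ∞) := by
  rcases le_total m n with h | h
  · rw [min_eq_left h, min_eq_left (by exact_mod_cast h)]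
  · rw [min_eq_right h, min_eq_right (by exact_mod_cast h)]

lemma top_ne_natCast (k : ℕ) : (⊤:ℕ∞) ≠ (k:ℕ∞) := by simp

lemma dF_zero : derivativeFun (0 : PowerSeries ℂ) = 0 := by
  ext n
  rw [coeff_derivativeFun]
  simp

lemma deriv_order {φ : PowerSeries ℂ} {k : ℕ}
    (h : φ.order = ((k+1 : ℕ) : ℕ∞)) : (derivativeFun φ).order = (k : ℕ∞) := by
  obtain ⟨h1, h2⟩ := order_eq_nat.1 h
  rw [order_eq_nat]
  constructor
  · rw [coeff_derivativeFun]
    exact mul_ne_zero h1 (Nat.cast_add_one_ne_zero k)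
  · intro i hi
    rw [coeff_derivativeFun, h2 (i+1) (by omega), zero_mul]

lemma ord_pow {x : PowerSeries ℂ} {v : ℕ} (h : x.order = (v:ℕ∞)) (k : ℕ) :
    (x^k).order = ((k*v : ℕ) : ℕ∞) := by
  induction k with
  | zero => simp [order_one]
  | succ k ih =>
    rw [pow_succ, order_mul, ih, h]
    push_cast
    ring

end Aux

/-- behaviour of `P - v` under blow-up: let `γ = (x(t), y(t))`
be an irreducible plane curve germ with `f(γ(t)) ≡ 0`, multiplicity
`v = ord x(t) ≤ ord y(t)`, and let `γ̂ = (x(t), θ(t))` with `x(t)θ(t) = y(t)`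
be the strict transform under blowing up the origin in the chart `y = θx`,
with equation `f̂(x,θ) = x^{-v} f(x, θx)`.  Then
`P(γ̂) - v(γ̂) = P(γ) - v(γ) - v(v-1)`, where
`P = min(ord f_x(γ), ord f_y(γ))` and `v` is the order of the arc. -/
theorem P_sub_v_blowup
    (f fhat : MvPowerSeries (Fin 2) ℂ) (x y θ : PowerSeries ℂ)
    (hx0 : constantCoeff x = 0) (hy0 : constantCoeff y = 0)
    (hθ0 : constantCoeff θ = 0)
    (hf : evalArc (x, y) f = 0)
    (v : ℕ) (hv1 : 1 ≤ v) (hvx : x.order = (v : ℕ∞)) (hvxy : x.order ≤ y.order)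
    (hstrict : x * θ = y)
    (hblow : (MvPowerSeries.X 0 : MvPowerSeries (Fin 2) ℂ) ^ v * fhat =
      evalPair (MvPowerSeries.X 0) (MvPowerSeries.X 1 * MvPowerSeries.X 0) f)
    (P Phat vhat : ℕ)
    (hP : min (evalArc (x, y) (pd 0 f)).order (evalArc (x, y) (pd 1 f)).order
      = (P : ℕ∞))
    (hPhat : min (evalArc (x, θ) (pd 0 fhat)).order
      (evalArc (x, θ) (pd 1 fhat)).order = (Phat : ℕ∞))
    (hvhat : min x.order θ.order = (vhat : ℕ∞)) :
    Phat + v + v * (v - 1) = P + vhat := by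
  classical
  set u := evalArc (x, y) (pd 0 f) with hu_def
  set w := evalArc (x, y) (pd 1 f) with hw_def
  set uh := evalArc (x, θ) (pd 0 fhat) with huh_def
  set wh := evalArc (x, θ) (pd 1 fhat) with hwh_def
  have hxne : x ≠ 0 := by
    intro h
    rw [h, order_zero] at hvx
    exact (top_ne_natCast _) hvx
  have hdx : (derivativeFun x).order = ((v-1 : ℕ) : ℕ∞) := by
    refine deriv_order ?_
    rw [hvx]
    congr 1
    omega
  have hdxne : derivativeFun x ≠ 0 := by
    intro h
    rw [h, order_zero] at hdx
    exact (top_ne_natCast _) hdx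
  -- chain rule along γ
  have hchain : derivativeFun x * u + derivativeFun y * w = 0 := by
    have h := arc_chain_rule hx0 hy0 f
    rw [hf, dF_zero] at h
    exact h.symm
  -- the strict transform has zero evaluation
  have h1 : x ^ v * evalArc (x, θ) fhat = 0 := by
    have h := congrArg (evalArc (x, θ)) hblow
    rw [evalArc_X0pow_mul hx0 hθ0, evalArc_comp hx0 hθ0, hstrict, hf] at h
    exact h
  have hfh0 : evalArc (x, θ) fhat = 0 := by
    rcases mul_eq_zero.1 h1 with h | h
    · exact absurd (pow_eq_zero_iff (by omega : v ≠ 0) |>.1 h) hxne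
    · exact h
  -- chain rule along γ̂
  have hchainh : derivativeFun x * uh + derivativeFun θ * wh = 0 := by
    have h := arc_chain_rule hx0 hθ0 fhat
    rw [hfh0, dF_zero] at h
    exact h.symm
  -- relation (2): x^v * ŵ = x * w
  have h2 : x ^ v * wh = x * w := by
    have h := congrArg (evalArc (x, θ)) (congrArg (pd 1) hblow)
    rw [pd1_X0pow_mul, pd1_E, evalArc_X0pow_mul hx0 hθ0, evalArc_X0_mul hx0 hθ0,
      evalArc_comp hx0 hθ0, hstrict] at h
    exact h
  -- w ≠ 0
  have hwne : w ≠ 0 := by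
    intro hw
    have h : derivativeFun x * u = 0 := by
      have := hchain
      rw [hw, mul_zero, add_zero] at this
      exact this
    have hu : u = 0 := by
      rcases mul_eq_zero.1 h with h' | h'
      · exact absurd h' hdxne
      · exact h'
    rw [hu, hw, order_zero] at hP
    simp at hP
  obtain ⟨W, hW⟩ : ∃ W : ℕ, w.order = (W : ℕ∞) := by
    cases hw : w.order with
    | top => exact absurd (order_eq_top.1 hw) hwne
    | coe W => exact ⟨W, rfl⟩
  -- order equation from (2)
  have heq2 : ((v*v : ℕ) : ℕ∞) + wh.order = ((v + W : ℕ) : ℕ∞) := by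
    have h := congrArg order h2
    rw [order_mul, order_mul, ord_pow hvx, hvx, hW] at h
    rw [h]
    push_cast
    rfl
  have hwhne : wh.order ≠ ⊤ := by
    intro h
    rw [h, add_top] at heq2
    exact (top_ne_natCast _) heq2
  obtain ⟨Wh, hWh⟩ : ∃ Wh : ℕ, wh.order = (Wh : ℕ∞) := by
    cases hw : wh.order with
    | top => exact absurd hw hwhne
    | coe Wh => exact ⟨Wh, rfl⟩
  have hnat1 : v*v + Wh = v + W := by
    rw [hWh] at heq2
    exact_mod_cast heq2
  have hsq : v*(v-1) + v = v*v := by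
    rcases v with _ | k
    · omega
    · rw [Nat.succ_sub_one]
      ring
  by_cases hθz : θ = 0
  · -- θ = 0 case
    have hdθ0 : derivativeFun θ = 0 := by rw [hθz]; exact dF_zero
    have hyz : y = 0 := by rw [← hstrict, hθz, mul_zero]
    have hdy0 : derivativeFun y = 0 := by rw [hyz]; exact dF_zero
    have hu : u = 0 := by
      have h : derivativeFun x * u = 0 := by
        have := hchain
        rw [hdy0, zero_mul, add_zero] at this
        exact this
      rcases mul_eq_zero.1 h with h' | h'
      · exact absurd h' hdxne
      · exact h'
    have huh : uh = 0 := by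
      have h : derivativeFun x * uh = 0 := by
        have := hchainh
        rw [hdθ0, zero_mul, add_zero] at this
        exact this
      rcases mul_eq_zero.1 h with h' | h'
      · exact absurd h' hdxne
      · exact h'
    have hPW : P = W := by
      rw [hu, order_zero, hW] at hP
      rw [min_comm, min_eq_left le_top] at hP
      exact_mod_cast hP.symm
    have hPhW : Phat = Wh := by
      rw [huh, order_zero, hWh] at hPhat
      rw [min_comm, min_eq_left le_top] at hPhat
      exact_mod_cast hPhat.symm
    have hvv : vhat = v := by
      rw [hvx, hθz, order_zero, min_eq_left le_top] at hvhat
      exact_mod_cast hvhat.symm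
    generalize hq : v*(v-1) = q at hsq ⊢
    generalize hs : v*v = s at hsq hnat1
    omega
  · -- θ ≠ 0 case
    obtain ⟨T, hT⟩ : ∃ T : ℕ, θ.order = (T : ℕ∞) := by
      cases hw : θ.order with
      | top => exact absurd (order_eq_top.1 hw) hθz
      | coe T => exact ⟨T, rfl⟩
    have hT1 : 1 ≤ T := by
      have h : (1 : ℕ∞) ≤ θ.order := by
        apply nat_le_order
        intro i hi
        interval_cases i
        simpa using hθ0
      rw [hT] at h
      exact_mod_cast h
    have hdθ : (derivativeFun θ).order = ((T-1 : ℕ) : ℕ∞) := by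
      refine deriv_order ?_
      rw [hT]
      congr 1
      omega
    have hdθne : derivativeFun θ ≠ 0 := by
      intro h
      rw [h, order_zero] at hdθ
      exact (top_ne_natCast _) hdθ
    have hyo : y.order = ((v + T : ℕ) : ℕ∞) := by
      rw [← hstrict, order_mul, hvx, hT]
      push_cast
      rfl
    have hdy : (derivativeFun y).order = ((v + T - 1 : ℕ) : ℕ∞) := by
      refine deriv_order ?_
      rw [hyo]
      congr 1
      omega
    -- order equation from chain rule on γ
    have h4 : derivativeFun x * u = -(derivativeFun y * w) :=
      eq_neg_of_add_eq_zero_left hchain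
    have heq4 : ((v-1 : ℕ) : ℕ∞) + u.order = ((v + T - 1 + W : ℕ) : ℕ∞) := by
      have h := congrArg order h4
      rw [order_mul, order_neg', order_mul, hdx, hdy, hW] at h
      rw [h]
      push_cast
      rfl
    have hune : u.order ≠ ⊤ := by
      intro h
      rw [h, add_top] at heq4
      exact (top_ne_natCast _) heq4
    obtain ⟨U, hU⟩ : ∃ U : ℕ, u.order = (U : ℕ∞) := by
      cases hw : u.order with
      | top => exact absurd hw hune
      | coe U => exact ⟨U, rfl⟩
    have hnat2 : (v-1) + U = v + T - 1 + W := by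
      rw [hU] at heq4
      exact_mod_cast heq4
    -- order equation from chain rule on γ̂
    have h5 : derivativeFun x * uh = -(derivativeFun θ * wh) :=
      eq_neg_of_add_eq_zero_left hchainh
    have heq5 : ((v-1 : ℕ) : ℕ∞) + uh.order = ((T - 1 + Wh : ℕ) : ℕ∞) := by
      have h := congrArg order h5
      rw [order_mul, order_neg', order_mul, hdx, hdθ, hWh] at h
      rw [h]
      push_cast
      rfl
    have huhne : uh.order ≠ ⊤ := by
      intro h
      rw [h, add_top] at heq5
      exact (top_ne_natCast _) heq5
    obtain ⟨Uh, hUh⟩ : ∃ Uh : ℕ, uh.order = (Uh : ℕ∞) := by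
      cases hw : uh.order with
      | top => exact absurd hw huhne
      | coe Uh => exact ⟨Uh, rfl⟩
    have hnat3 : (v-1) + Uh = T - 1 + Wh := by
      rw [hUh] at heq5
      exact_mod_cast heq5
    have hPmin : P = min U W := by
      rw [hU, hW] at hP
      rw [← natCast_min] at hP
      exact_mod_cast hP.symm
    have hPhmin : Phat = min Uh Wh := by
      rw [hUh, hWh] at hPhat
      rw [← natCast_min] at hPhat
      exact_mod_cast hPhat.symm
    have hvmin : vhat = min v T := by
      rw [hvx, hT, ← natCast_min] at hvhat
      exact_mod_cast hvhat.symm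
    generalize hq : v*(v-1) = q at hsq ⊢
    generalize hs : v*v = s at hsq hnat1
    omega
end

section
/- Modality of the singularity x^p + y^q for coprime p, q: m = pq/2 − 3p/2 − 3q/2 + 7/2 + ⌊q/p⌋, and this number equals the number of integer lattice points (x,y) with 0 ≤ x ≤ q−2, 0 ≤ y ≤ p−2 lying strictly above the line px + qy = pq (Kouchnirenko's formula). -/
open Finset

lemma card_filter_prod (s t : Finset ℕ) (P : ℕ × ℕ → Prop) [DecidablePred P] :
    ((s ×ˢ t).filter P).card = ∑ x ∈ s, (t.filter (fun y => P (x, y))).card := by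
  rw [Finset.card_eq_sum_card_fiberwise (f := Prod.fst) (t := s)
    (fun z hz => (Finset.mem_product.1 (Finset.mem_filter.1 hz).1).1)]
  refine Finset.sum_congr rfl fun x hx => ?_
  refine Finset.card_nbij' (fun z => z.2) (fun y => (x, y)) ?_ ?_ ?_ ?_
  · simp only [Set.MapsTo, Finset.mem_coe]
    intro z hz
    simp only [Finset.mem_filter, Finset.mem_product] at hz ⊢
    obtain ⟨⟨⟨h1, h2⟩, hP⟩, hfst⟩ := hz
    refine ⟨h2, ?_⟩
    rwa [← hfst, Prod.mk.eta]
  · simp only [Set.MapsTo, Finset.mem_coe]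
    intro y hy
    simp only [Finset.mem_filter, Finset.mem_product] at hy ⊢
    exact ⟨⟨⟨hx, hy.1⟩, hy.2⟩, trivial⟩
  · simp only [Set.LeftInvOn, Finset.mem_coe]
    intro z hz
    simp only [Finset.mem_filter] at hz
    simp [← hz.2]
  · intro y hy; rfl

lemma fiber_count (p q x : ℕ) (hp : 0 < p) (hq : 0 < q) (hx : x ≤ q) :
    ((Finset.range (p-1)).filter (fun y => p*q < p*x + q*y)).card
      = (p-1) - min (p-1) (p*(q-x)/q + 1) := by
  have hsub : p*(q-x) = p*q - p*x := Nat.mul_sub p q x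
  have hkey : ∀ y, (¬ p*q < p*x + q*y) ↔ y ≤ p*(q-x)/q := by
    intro y
    have hxq : p*x ≤ p*q := Nat.mul_le_mul_left p hx
    rw [not_lt, Nat.le_div_iff_mul_le hq, hsub, mul_comm y q]
    omega
  have hneg : (Finset.range (p-1)).filter (fun y => ¬ p*q < p*x + q*y)
      = Finset.range (min (p-1) (p*(q-x)/q + 1)) := by
    ext y
    simp only [Finset.mem_filter, Finset.mem_range, hkey, lt_min_iff]
    omega
  have h := Finset.card_filter_add_card_filter_not
    (s := Finset.range (p-1)) (p := fun y => p*q < p*x + q*y)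
  rw [hneg] at h
  simp only [Finset.card_range] at h
  omega

lemma pair_div (p q j : ℕ) (hp : 0 < p) (hq0 : 0 < q) (hcop : Nat.Coprime p q)
    (hj : 0 < j) (hjq : j < q) : p*j/q + p*(q-j)/q = p - 1 := by
  set a := p*j with ha
  set b := p*(q-j) with hb
  have hab : a + b = p*q := by rw [ha, hb, ← Nat.mul_add, Nat.add_sub_cancel' hjq.le]
  have hnda : ¬ q ∣ a := by
    intro h
    have hqj : q ∣ j := (Nat.Coprime.dvd_of_dvd_mul_left (hcop.symm)) h
    exact absurd (Nat.le_of_dvd hj hqj) (not_le.2 hjq)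
  have hndb : ¬ q ∣ b := by
    intro h
    have hqj : q ∣ (q - j) := (Nat.Coprime.dvd_of_dvd_mul_left (hcop.symm)) h
    have := Nat.le_of_dvd (by omega) hqj
    omega
  have ham : a % q ≠ 0 := fun h => hnda (Nat.dvd_of_mod_eq_zero h)
  have hbm : b % q ≠ 0 := fun h => hndb (Nat.dvd_of_mod_eq_zero h)
  have h0 : (a % q + b % q) % q = 0 := by
    rw [← Nat.add_mod, hab, Nat.mul_mod_left]
  obtain ⟨k, hk⟩ := Nat.dvd_of_mod_eq_zero h0
  have hma : a % q < q := Nat.mod_lt _ hq0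
  have hmb : b % q < q := Nat.mod_lt _ hq0
  have hk1 : k = 1 := by
    rcases Nat.lt_or_ge k 2 with h | h
    · have hk0 : k ≠ 0 := by rintro rfl; simp at hk; omega
      omega
    · have : q * 2 ≤ q * k := Nat.mul_le_mul_left q h
      omega
  subst hk1
  have hsum : a % q + b % q = q := by omega
  have hdivq : (a + b) / q = p := by rw [hab, Nat.mul_div_cancel _ hq0]
  rw [Nat.add_div hq0, hsum, if_pos le_rfl] at hdivq
  omega

lemma two_mul_sum_div (p q : ℕ) (hp : 0 < p) (hq0 : 0 < q) (hcop : Nat.Coprime p q) :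
    2 * ∑ j ∈ Finset.Ico 1 q, p*j/q = (p-1)*(q-1) := by
  have hrefl : ∑ j ∈ Finset.Ico 1 q, p*(q-j)/q = ∑ j ∈ Finset.Ico 1 q, p*j/q := by
    refine Finset.sum_nbij' (fun j => q - j) (fun j => q - j) ?_ ?_ ?_ ?_ ?_ <;>
      intro j hj <;> simp only [Finset.mem_Ico] at * <;> omega
  calc 2 * ∑ j ∈ Finset.Ico 1 q, p*j/q
      = ∑ j ∈ Finset.Ico 1 q, (p*j/q + p*(q-j)/q) := by
        rw [Finset.sum_add_distrib, hrefl]; ring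
    _ = ∑ j ∈ Finset.Ico 1 q, (p-1) := by
        refine Finset.sum_congr rfl fun j hj => ?_
        simp only [Finset.mem_Ico] at hj
        exact pair_div p q j hp hq0 hcop hj.1 hj.2
    _ = (p-1)*(q-1) := by
        rw [Finset.sum_const, Nat.card_Ico, smul_eq_mul]; ring


lemma sum_reflect_div (p q : ℕ) (hq : 3 ≤ q) (hpq : p < q) :
    ∑ x ∈ Finset.Ico 1 (q-1), p*(q-x)/q = ∑ j ∈ Finset.Ico 1 q, p*j/q := by
  have h1 : ∑ x ∈ Finset.Ico 1 (q-1), p*(q-x)/q = ∑ j ∈ Finset.Ico 2 q, p*j/q := by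
    refine Finset.sum_nbij' (fun x => q - x) (fun j => q - j) ?_ ?_ ?_ ?_ ?_ <;>
      intro a ha <;> simp only [Finset.mem_Ico] at * <;> omega
  rw [h1, Finset.sum_eq_sum_Ico_succ_bot (by omega : 1 < q) (fun j => p*j/q),
    Nat.mul_one, Nat.div_eq_of_lt hpq, Nat.zero_add]

/-- modality of `x^p + y^q` and Kouchnirenko's formula: for
coprime `2 ≤ p < q`, the modality `m` of the singularity `x^p + y^q`, obtained
from `μ = c + m - 1` with Milnor number `μ = (p-1)(q-1)` and codimension
`c = (p+1)(q+1)/2 - 2 - ⌊q/p⌋` of the `μ = const` stratum, satisfies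
`m = pq/2 - 3p/2 - 3q/2 + 7/2 + ⌊q/p⌋`, and this number equals the number of
integer points `(x,y)` with `0 ≤ x ≤ q-2`, `0 ≤ y ≤ p-2` lying strictly above
the line `px + qy = pq` (Kouchnirenko's formula). -/
theorem modality_xp_yq (p q : ℕ) (hp : 2 ≤ p) (hpq : p < q)
    (hcop : Nat.Coprime p q) :
    letI c : ℤ := ((p + 1) * (q + 1) : ℤ) / 2 - 2 - (q / p : ℕ)
    letI m : ℤ := ((p - 1) * (q - 1) : ℤ) + 1 - c
    (m : ℚ) = (p * q : ℚ) / 2 - 3 * p / 2 - 3 * q / 2 + 7 / 2 + (q / p : ℕ) ∧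
      m = ((Finset.range (q - 1) ×ˢ Finset.range (p - 1)).filter
        (fun xy => p * q < p * xy.1 + q * xy.2)).card := by
  have hp0 : 0 < p := by omega
  have hq0 : 0 < q := by omega
  have hq3 : 3 ≤ q := by omega
  -- the integer division is exact
  have heven : Even ((p+1) * (q+1)) := by
    rcases Nat.even_or_odd p with hpe | hpo
    · have hqo : Odd q := by
        rcases Nat.even_or_odd q with hqe | hqo
        · exfalso
          have h2 : (2:ℕ) ∣ Nat.gcd p q := Nat.dvd_gcd hpe.two_dvd hqe.two_dvd
          rw [hcop] at h2; omega
        · exact hqo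
      exact (Odd.add_one hqo).mul_left _
    · exact ((Odd.add_one hpo).mul_right _)
  obtain ⟨knat, hknat⟩ := heven
  have hk : ((p:ℤ)+1) * ((q:ℤ)+1) = 2 * (knat:ℤ) := by
    have := congrArg (Nat.cast (R := ℤ)) hknat
    push_cast at this
    linarith
  have hdiv2 : ((p + 1) * (q + 1) : ℤ) / 2 = (knat : ℤ) := by
    push_cast
    rw [hk]
    exact Int.mul_ediv_cancel_left _ two_ne_zero
  -- the big counting computation
  set Snat := ∑ j ∈ Finset.Ico 1 q, p*j/q with hSnat
  have hS2 : 2 * Snat = (p-1)*(q-1) := two_mul_sum_div p q hp0 hq0 hcop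
  have hcard : (((Finset.range (q - 1) ×ˢ Finset.range (p - 1)).filter
      (fun xy => p * q < p * xy.1 + q * xy.2)).card : ℤ)
      = ((q:ℤ)-2) * ((p:ℤ)-2) - (Snat:ℤ) + ((q/p : ℕ):ℤ) := by
    rw [card_filter_prod]
    have hfib : ∀ x ∈ Finset.range (q-1),
        ((Finset.range (p-1)).filter (fun y => p*q < p*x + q*y)).card
          = (p-1) - min (p-1) (p*(q-x)/q + 1) := fun x hx =>
      fiber_count p q x hp0 hq0 (by simp only [Finset.mem_range] at hx; omega)
    rw [Finset.sum_congr rfl hfib]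
    rw [Finset.range_eq_Ico, Finset.sum_eq_sum_Ico_succ_bot (by omega : 0 < q - 1)]
    have h00 : (p-1) - min (p-1) (p*(q-0)/q + 1) = 0 := by
      rw [Nat.sub_zero, Nat.mul_div_cancel _ hq0]
      omega
    rw [h00, Nat.zero_add]
    push_cast [Nat.cast_sum]
    have hterm : ∀ x ∈ Finset.Ico 1 (q-1),
        (((p-1) - min (p-1) (p*(q-x)/q + 1) : ℕ) : ℤ)
          = (((p:ℤ)-2) - ((p*(q-x)/q : ℕ):ℤ)) + (if x ≤ q/p then 1 else 0) := by
      intro x hx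
      simp only [Finset.mem_Ico] at hx
      set v := p*(q-x)/q with hv
      have hvp : v < p := by
        rw [hv, Nat.div_lt_iff_lt_mul hq0]
        calc p*(q-x) ≤ p*(q-1) := Nat.mul_le_mul_left p (by omega)
          _ < p*q := by
            have : p*(q-1) = p*q - p := by rw [Nat.mul_sub]; ring_nf
            have hpq' : p ≤ p*q := Nat.le_mul_of_pos_right p hq0
            omega
      have hiff : (p-1 ≤ v) ↔ x ≤ q/p := by
        rw [hv, Nat.le_div_iff_mul_le hq0, Nat.le_div_iff_mul_le hp0]
        have e1 : p*(q-x) = p*q - p*x := Nat.mul_sub p q x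
        have e2 : (p-1)*q = p*q - q := by rw [Nat.sub_mul]; ring_nf
        have e3 : p*x ≤ p*q := Nat.mul_le_mul_left p (by omega)
        have e4 : q ≤ p*q := Nat.le_mul_of_pos_left q hp0
        have e5 : x*p = p*x := Nat.mul_comm x p
        omega
      by_cases hxc : x ≤ q/p
      · have hveq : v = p - 1 := by have := hiff.2 hxc; omega
        rw [if_pos hxc, hveq]
        have : (p-1) - min (p-1) ((p-1) + 1) = 0 := by omega
        rw [this]
        push_cast [Nat.cast_sub (by omega : 1 ≤ p)]
        ring
      · have hvle : v ≤ p - 2 := by have := hiff.not.2 hxc; omega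
        rw [if_neg hxc]
        have : (p-1) - min (p-1) (v + 1) = p - 2 - v := by omega
        rw [this]
        push_cast [Nat.cast_sub (by omega : v ≤ p - 2), Nat.cast_sub (by omega : 2 ≤ p)]
        ring
    rw [Finset.sum_congr rfl hterm, Finset.sum_add_distrib, Finset.sum_sub_distrib,
      Finset.sum_const, Nat.card_Ico]
    have hsum1 : ∑ x ∈ Finset.Ico 1 (q-1), ((p*(q-x)/q : ℕ):ℤ) = (Snat:ℤ) := by
      rw [← Nat.cast_sum, sum_reflect_div p q hq3 hpq]
    have hsum2 : (∑ x ∈ Finset.Ico 1 (q-1), if x ≤ q/p then (1:ℤ) else 0)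
        = ((q/p : ℕ) : ℤ) := by
      rw [Finset.sum_boole]
      have hqp2 : q/p ≤ q/2 := Nat.div_le_div_left hp (by omega)
      have hflt : (Finset.Ico 1 (q-1)).filter (fun x => x ≤ q/p)
          = Finset.Ico 1 (q/p + 1) := by
        ext x
        simp only [Finset.mem_filter, Finset.mem_Ico]
        omega
      rw [hflt, Nat.card_Ico]
      norm_num
    rw [hsum1, hsum2]
    have hcast : ((q - 1 - 1 : ℕ) : ℤ) = (q:ℤ) - 2 := by
      push_cast [Nat.cast_sub (by omega : 1 ≤ q), Nat.cast_sub (by omega : 1 ≤ q - 1)]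
      omega
    rw [nsmul_eq_mul, hcast]
    push_cast
    ring
  -- now the two conjuncts
  set d := q / p with hd
  rw [hdiv2]
  have hS2' : 2*(Snat:ℤ) = ((p:ℤ)-1)*((q:ℤ)-1) := by
    have := congrArg (Nat.cast (R := ℤ)) hS2
    push_cast [Nat.cast_sub (by omega : 1 ≤ p), Nat.cast_sub (by omega : 1 ≤ q)] at this
    linarith
  constructor
  · have hkQ : ((p:ℚ)+1)*((q:ℚ)+1) = 2*(knat:ℚ) := by
      have := congrArg (Nat.cast (R := ℚ)) hknat
      push_cast at this; linarith
    push_cast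
    linear_combination (1/2 : ℚ) * hkQ
  · rw [hcard]
    ring_nf at hS2' hk ⊢
    linarith [hS2', hk]
end
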